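/- arXiv:2408.01755 — 8 statements merged into one kernel-verified Lean document; each statement's English description precedes it below -/
import Mathlib

section
/- Let g : I → ℝ be a continuous function on an interval I ⊆ ℝ. Then g is unimodal (has at most two intervals of monotonicity, first increasing then decreasing or first decreasing then increasing) if and only if for every λ ∈ ℝ the function μ ↦ g(μ) − λ has at most 2 sign changes on I, and for all λ for which it has exactly 2 sign changes, the sign pattern (either (−,+,−) or (+,−,+)) is the same for all such λ. -/
open Set Filter Topology

/-- `f` has at least `n` sign changes on `I`: there are `n+1` increasing points of `I`
on which `f` alternates in sign. -/
def HasSignChangesOn (f : ℝ → ℝ) (I : Set ℝ) (n : ℕ) : Prop :=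
  ∃ x : Fin (n + 1) → ℝ, (∀ i, x i ∈ I) ∧ StrictMono x ∧
    ∀ i : Fin n, f (x i.castSucc) * f (x i.succ) < 0

/-- The sign pattern of `f` on `I` is `(-, +, -)`. -/
def PatternNegPosNegOn (f : ℝ → ℝ) (I : Set ℝ) : Prop :=
  ∃ x : Fin 3 → ℝ, (∀ i, x i ∈ I) ∧ StrictMono x ∧
    f (x 0) < 0 ∧ 0 < f (x 1) ∧ f (x 2) < 0

/-- `g` is unimodal on `I`: at most two intervals of monotonicity. -/
def UnimodalOn (g : ℝ → ℝ) (I : Set ℝ) : Prop :=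
  MonotoneOn g I ∨ AntitoneOn g I ∨
    ∃ μ₀ ∈ I,
      (MonotoneOn g (I ∩ Iic μ₀) ∧ AntitoneOn g (I ∩ Ici μ₀)) ∨
      (AntitoneOn g (I ∩ Iic μ₀) ∧ MonotoneOn g (I ∩ Ici μ₀))

/- ### Auxiliary lemmas -/

lemma hasSignChanges_two' {f : ℝ → ℝ} {I : Set ℝ} {a b c : ℝ}
    (ha : a ∈ I) (hb : b ∈ I) (hc : c ∈ I) (hab : a < b) (hbc : b < c)
    (h1 : f a * f b < 0) (h2 : f b * f c < 0) : HasSignChangesOn f I 2 := by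
  refine ⟨![a, b, c], ?_, ?_, ?_⟩
  · intro i; fin_cases i <;> simpa
  · rw [Fin.strictMono_iff_lt_succ]
    intro i; fin_cases i <;> simpa
  · intro i; fin_cases i <;> simpa

lemma hasSignChanges_three' {f : ℝ → ℝ} {I : Set ℝ} {a b c d : ℝ}
    (ha : a ∈ I) (hb : b ∈ I) (hc : c ∈ I) (hd : d ∈ I)
    (hab : a < b) (hbc : b < c) (hcd : c < d)
    (h1 : f a * f b < 0) (h2 : f b * f c < 0) (h3 : f c * f d < 0) :
    HasSignChangesOn f I 3 := by
  refine ⟨![a, b, c, d], ?_, ?_, ?_⟩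
  · intro i; fin_cases i <;> simpa
  · rw [Fin.strictMono_iff_lt_succ]
    intro i; fin_cases i <;> simpa
  · intro i; fin_cases i <;> simpa

lemma patternNPN_mk {f : ℝ → ℝ} {I : Set ℝ} {a b c : ℝ}
    (ha : a ∈ I) (hb : b ∈ I) (hc : c ∈ I) (hab : a < b) (hbc : b < c)
    (h0 : f a < 0) (h1 : 0 < f b) (h2 : f c < 0) : PatternNegPosNegOn f I := by
  refine ⟨![a, b, c], ?_, ?_, ?_, ?_, ?_⟩
  · intro i; fin_cases i <;> simpa
  · rw [Fin.strictMono_iff_lt_succ]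
    intro i; fin_cases i <;> simpa
  · simpa
  · simpa
  · simpa

lemma sign2 {f : ℝ → ℝ} {I : Set ℝ} (hs : HasSignChangesOn f I 2) :
    ∃ a b c : ℝ, a ∈ I ∧ b ∈ I ∧ c ∈ I ∧ a < b ∧ b < c ∧
      ((f a < 0 ∧ 0 < f b ∧ f c < 0) ∨ (0 < f a ∧ f b < 0 ∧ 0 < f c)) := by
  obtain ⟨x, hxI, hxm, halt⟩ := hs
  have h01 : f (x 0) * f (x 1) < 0 := by simpa using halt 0
  have h12 : f (x 1) * f (x 2) < 0 := by simpa using halt 1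
  refine ⟨x 0, x 1, x 2, hxI 0, hxI 1, hxI 2, hxm (by decide), hxm (by decide), ?_⟩
  rcases mul_neg_iff.mp h01 with ⟨h0, h1⟩ | ⟨h0, h1⟩ <;>
    rcases mul_neg_iff.mp h12 with ⟨h1', h2⟩ | ⟨h1', h2⟩ <;>
    first
      | (exact Or.inl ⟨h0, h1', h2⟩)
      | (exact Or.inr ⟨h0, h1', h2⟩)
      | linarith

lemma sign3 {f : ℝ → ℝ} {I : Set ℝ} (hs : HasSignChangesOn f I 3) :
    ∃ a b c d : ℝ, a ∈ I ∧ b ∈ I ∧ c ∈ I ∧ d ∈ I ∧ a < b ∧ b < c ∧ c < d ∧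
      ((f a < 0 ∧ 0 < f b ∧ f c < 0 ∧ 0 < f d) ∨
        (0 < f a ∧ f b < 0 ∧ 0 < f c ∧ f d < 0)) := by
  obtain ⟨x, hxI, hxm, halt⟩ := hs
  have h01 : f (x 0) * f (x 1) < 0 := by simpa using halt 0
  have h12 : f (x 1) * f (x 2) < 0 := by simpa using halt 1
  have h23 : f (x 2) * f (x 3) < 0 := by simpa using halt 2
  refine ⟨x 0, x 1, x 2, x 3, hxI 0, hxI 1, hxI 2, hxI 3,
    hxm (by decide), hxm (by decide), hxm (by decide), ?_⟩
  rcases mul_neg_iff.mp h01 with ⟨h0, h1⟩ | ⟨h0, h1⟩ <;>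
    rcases mul_neg_iff.mp h12 with ⟨h1', h2⟩ | ⟨h1', h2⟩ <;>
    rcases mul_neg_iff.mp h23 with ⟨h2', h3⟩ | ⟨h2', h3⟩ <;>
    first
      | (exact Or.inl ⟨h0, h1', h2', h3⟩)
      | (exact Or.inr ⟨h0, h1', h2', h3⟩)
      | linarith

lemma two_of_three {f : ℝ → ℝ} {I : Set ℝ} (h : HasSignChangesOn f I 3) :
    HasSignChangesOn f I 2 := by
  obtain ⟨x, hxI, hxm, halt⟩ := h
  exact hasSignChanges_two' (hxI 0) (hxI 1) (hxI 2) (hxm (by decide)) (hxm (by decide))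
    (by simpa using halt 0) (by simpa using halt 1)

/-- In the increasing-then-decreasing case, the pattern `(+,-,+)` is impossible. -/
lemma pnp_false {g : ℝ → ℝ} {I : Set ℝ} {μ₀ : ℝ}
    (h1 : MonotoneOn g (I ∩ Iic μ₀)) (h2 : AntitoneOn g (I ∩ Ici μ₀))
    {l a b c : ℝ} (ha : a ∈ I) (hb : b ∈ I) (hc : c ∈ I) (hab : a < b) (hbc : b < c)
    (hfa : 0 < g a - l) (hfb : g b - l < 0) (hfc : 0 < g c - l) : False := by
  rcases le_or_gt b μ₀ with h | h
  · have := h1 ⟨ha, hab.le.trans h⟩ ⟨hb, h⟩ hab.le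
    linarith
  · have := h2 ⟨hb, h.le⟩ ⟨hc, (h.trans hbc).le⟩ hbc.le
    linarith

/-- In the decreasing-then-increasing case, the pattern `(-,+,-)` is impossible. -/
lemma npn_false {g : ℝ → ℝ} {I : Set ℝ} {μ₀ : ℝ}
    (h1 : AntitoneOn g (I ∩ Iic μ₀)) (h2 : MonotoneOn g (I ∩ Ici μ₀))
    {l a b c : ℝ} (ha : a ∈ I) (hb : b ∈ I) (hc : c ∈ I) (hab : a < b) (hbc : b < c)
    (hfa : g a - l < 0) (hfb : 0 < g b - l) (hfc : g c - l < 0) : False := by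
  rcases le_or_gt b μ₀ with h | h
  · have := h1 ⟨ha, hab.le.trans h⟩ ⟨hb, h⟩ hab.le
    linarith
  · have := h2 ⟨hb, h.le⟩ ⟨hc, (h.trans hbc).le⟩ hbc.le
    linarith

/-- A continuous quasiconcave function on an order-connected set is
increasing then decreasing. -/
lemma unimodal_of_no_valley {I : Set ℝ} {g : ℝ → ℝ} (hI : I.OrdConnected)
    (hg : ContinuousOn g I)
    (H : ∀ a ∈ I, ∀ b ∈ I, ∀ c ∈ I, a < b → b < c → g a ≤ g b ∨ g c ≤ g b) :
    MonotoneOn g I ∨ AntitoneOn g I ∨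
      ∃ μ₀ ∈ I, MonotoneOn g (I ∩ Iic μ₀) ∧ AntitoneOn g (I ∩ Ici μ₀) := by
  classical
  set R : Set ℝ := {x | x ∈ I ∧ ∃ y ∈ I, x < y ∧ g x < g y} with hRdef
  have fact1 : ∀ x ∈ I, ∀ x' ∈ R, x < x' → g x ≤ g x' ∧ x ∈ R := by
    rintro x hx x' ⟨hx'I, y, hyI, hxy, hgy⟩ hlt
    have h := H x hx x' hx'I y hyI hlt hxy
    have hle : g x ≤ g x' := h.resolve_right (by linarith)
    exact ⟨hle, hx, y, hyI, hlt.trans hxy, lt_of_le_of_lt hle hgy⟩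
  have hnotR : ∀ x ∈ I, x ∉ R → ∀ y ∈ I, x < y → g y ≤ g x := by
    intro x hx hxR y hy hxy
    by_contra hcon
    exact hxR ⟨hx, y, hy, hxy, not_le.mp hcon⟩
  by_cases hall : ∀ x ∈ I, x ∈ R
  · left
    intro a ha b hb hab
    rcases lt_or_eq_of_le hab with h | h
    · exact (fact1 a ha b (hall b hb) h).1
    · rw [h]
  push_neg at hall
  obtain ⟨t, htI, htR⟩ := hall
  by_cases hRne : R.Nonempty
  swap
  · right; left
    intro a ha b hb hab
    rcases lt_or_eq_of_le hab with h | h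
    · exact hnotR a ha (fun hcon => hRne ⟨a, hcon⟩) b hb h
    · rw [h]
  right; right
  have hub : t ∈ upperBounds R := by
    intro r hr
    by_contra hcon
    exact htR (fact1 t htI r hr (not_le.mp hcon)).2
  have hbdd : BddAbove R := ⟨t, hub⟩
  set μ₀ := sSup R with hμdef
  obtain ⟨r₀, hr₀⟩ := hRne
  have hr₀μ : r₀ ≤ μ₀ := le_csSup hbdd hr₀
  have hμt : μ₀ ≤ t := csSup_le ⟨r₀, hr₀⟩ hub
  have hμI : μ₀ ∈ I := hI.out hr₀.1 htI ⟨hr₀μ, hμt⟩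
  have hbelow : ∀ z ∈ I, z < μ₀ → z ∈ R := by
    intro z hz hzμ
    obtain ⟨r, hrR, hzr⟩ := exists_lt_of_lt_csSup ⟨r₀, hr₀⟩ hzμ
    exact (fact1 z hz r hrR hzr).2
  have hμR : μ₀ ∉ R := by
    rintro ⟨_, w, hwI, hμw, hgw⟩
    have key : ∀ z ∈ Ioo μ₀ w, g w ≤ g z := by
      intro z hz
      have hzI : z ∈ I := hI.out hμI hwI ⟨hz.1.le, hz.2.le⟩
      have hzR : z ∉ R := fun hcon => absurd (le_csSup hbdd hcon) (not_le.mpr hz.1)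
      exact hnotR z hzI hzR w hwI hz.2
    have hne : (𝓝[Ioo μ₀ w] μ₀).NeBot := left_nhdsWithin_Ioo_neBot hμw
    have htend : Filter.Tendsto g (𝓝[Ioo μ₀ w] μ₀) (𝓝 (g μ₀)) :=
      (hg μ₀ hμI).mono (fun z hz => hI.out hμI hwI ⟨hz.1.le, hz.2.le⟩)
    have : g w ≤ g μ₀ :=
      ge_of_tendsto htend (Filter.eventually_of_mem self_mem_nhdsWithin key)
    linarith
  refine ⟨μ₀, hμI, ?_, ?_⟩
  · rintro a ⟨haI, haμ⟩ b ⟨hbI, hbμ⟩ hab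
    rcases lt_or_eq_of_le hab with hab | h
    swap
    · rw [h]
    rcases lt_or_eq_of_le (show b ≤ μ₀ from hbμ) with hbμ' | heq
    · exact (fact1 a haI b (hbelow b hbI hbμ') hab).1
    · subst heq
      have key : ∀ z ∈ Ioo a μ₀, g a ≤ g z := by
        intro z hz
        have hzI : z ∈ I := hI.out haI hbI ⟨hz.1.le, hz.2.le⟩
        exact (fact1 a haI z (hbelow z hzI hz.2) hz.1).1
      have hne : (𝓝[Ioo a μ₀] μ₀).NeBot := right_nhdsWithin_Ioo_neBot hab
      have htend : Filter.Tendsto g (𝓝[Ioo a μ₀] μ₀) (𝓝 (g μ₀)) :=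
        (hg μ₀ hbI).mono (fun z hz => hI.out haI hbI ⟨hz.1.le, hz.2.le⟩)
      exact ge_of_tendsto htend (Filter.eventually_of_mem self_mem_nhdsWithin key)
  · rintro a ⟨haI, haμ⟩ b ⟨hbI, hbμ⟩ hab
    rcases lt_or_eq_of_le hab with hab | h
    swap
    · rw [h]
    have haR : a ∉ R := by
      rcases lt_or_eq_of_le (show μ₀ ≤ a from haμ) with h' | h'
      · exact fun hcon => absurd (le_csSup hbdd hcon) (not_le.mpr h')
      · rw [← h']; exact hμR
    exact hnotR a haI haR b hbI hab

theorem unimodal_iff_sign_changes (I : Set ℝ) (hI : I.OrdConnected) (g : ℝ → ℝ)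
    (hg : ContinuousOn g I) :
    UnimodalOn g I ↔
      ((∀ l : ℝ, ¬ HasSignChangesOn (fun μ => g μ - l) I 3) ∧
        ∀ l l' : ℝ,
          (HasSignChangesOn (fun μ => g μ - l) I 2 ∧
            ¬ HasSignChangesOn (fun μ => g μ - l) I 3) →
          (HasSignChangesOn (fun μ => g μ - l') I 2 ∧
            ¬ HasSignChangesOn (fun μ => g μ - l') I 3) →
          (PatternNegPosNegOn (fun μ => g μ - l) I ↔
            PatternNegPosNegOn (fun μ => g μ - l') I)) := by
  constructor
  · rintro (hm | hm | ⟨μ₀, hμI, ⟨h1, h2⟩ | ⟨h1, h2⟩⟩)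
    · -- monotone
      have key : ∀ l, ¬ HasSignChangesOn (fun μ => g μ - l) I 2 := by
        intro l hs
        obtain ⟨a, b, c, ha, hb, hc, hab, hbc, hpat⟩ := sign2 hs
        rcases hpat with ⟨p0, p1, p2⟩ | ⟨p0, p1, p2⟩
        · have := hm hb hc hbc.le
          linarith
        · have := hm ha hb hab.le
          linarith
      exact ⟨fun l hs => key l (two_of_three hs), fun l l' h h' => absurd h.1 (key l)⟩
    · -- antitone
      have key : ∀ l, ¬ HasSignChangesOn (fun μ => g μ - l) I 2 := by
        intro l hs
        obtain ⟨a, b, c, ha, hb, hc, hab, hbc, hpat⟩ := sign2 hs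
        rcases hpat with ⟨p0, p1, p2⟩ | ⟨p0, p1, p2⟩
        · have := hm ha hb hab.le
          linarith
        · have := hm hb hc hbc.le
          linarith
      exact ⟨fun l hs => key l (two_of_three hs), fun l l' h h' => absurd h.1 (key l)⟩
    · -- increasing then decreasing : no (+,-,+)
      refine ⟨?_, ?_⟩
      · intro l hs
        obtain ⟨a, b, c, d, ha, hb, hc, hd, hab, hbc, hcd, hpat⟩ := sign3 hs
        rcases hpat with ⟨p0, p1, p2, p3⟩ | ⟨p0, p1, p2, p3⟩
        · exact pnp_false h1 h2 hb hc hd hbc hcd p1 p2 p3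
        · exact pnp_false h1 h2 ha hb hc hab hbc p0 p1 p2
      · intro l l' hl hl'
        have hall : ∀ m : ℝ, HasSignChangesOn (fun μ => g μ - m) I 2 →
            PatternNegPosNegOn (fun μ => g μ - m) I := by
          intro m hs
          obtain ⟨a, b, c, ha, hb, hc, hab, hbc, hpat⟩ := sign2 hs
          rcases hpat with ⟨p0, p1, p2⟩ | ⟨p0, p1, p2⟩
          · exact patternNPN_mk ha hb hc hab hbc p0 p1 p2
          · exact absurd (pnp_false h1 h2 ha hb hc hab hbc p0 p1 p2) id
        exact iff_of_true (hall l hl.1) (hall l' hl'.1)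
    · -- decreasing then increasing : no (-,+,-)
      refine ⟨?_, ?_⟩
      · intro l hs
        obtain ⟨a, b, c, d, ha, hb, hc, hd, hab, hbc, hcd, hpat⟩ := sign3 hs
        rcases hpat with ⟨p0, p1, p2, p3⟩ | ⟨p0, p1, p2, p3⟩
        · exact npn_false h1 h2 ha hb hc hab hbc p0 p1 p2
        · exact npn_false h1 h2 hb hc hd hbc hcd p1 p2 p3
      · intro l l' hl hl'
        have hall : ∀ m : ℝ, ¬ PatternNegPosNegOn (fun μ => g μ - m) I := by
          rintro m ⟨x, hxI, hxm, p0, p1, p2⟩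
          exact npn_false h1 h2 (hxI 0) (hxI 1) (hxI 2)
            (hxm (by decide)) (hxm (by decide)) p0 p1 p2
        exact iff_of_false (hall l) (hall l')
  · rintro ⟨hA, hB⟩
    by_cases hV : ∃ a ∈ I, ∃ b ∈ I, ∃ c ∈ I, a < b ∧ b < c ∧ g b < g a ∧ g b < g c
    · by_cases hP : ∃ a ∈ I, ∃ b ∈ I, ∃ c ∈ I, a < b ∧ b < c ∧ g a < g b ∧ g c < g b
      · exfalso
        obtain ⟨a, ha, b, hb, c, hc, hab, hbc, hv1, hv2⟩ := hV
        obtain ⟨a', ha', b', hb', c', hc', hab', hbc', hp1, hp2⟩ := hP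
        set l : ℝ := (g b + min (g a) (g c)) / 2 with hldef
        set l' : ℝ := (g b' + max (g a') (g c')) / 2 with hl'def
        have hm1 : min (g a) (g c) ≤ g a := min_le_left _ _
        have hm2 : min (g a) (g c) ≤ g c := min_le_right _ _
        have hm3 : g b < min (g a) (g c) := lt_min hv1 hv2
        have hfa : 0 < g a - l := by rw [hldef]; linarith
        have hfb : g b - l < 0 := by rw [hldef]; linarith
        have hfc : 0 < g c - l := by rw [hldef]; linarith
        have hM1 : g a' ≤ max (g a') (g c') := le_max_left _ _
        have hM2 : g c' ≤ max (g a') (g c') := le_max_right _ _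
        have hM3 : max (g a') (g c') < g b' := max_lt hp1 hp2
        have hfa' : g a' - l' < 0 := by rw [hl'def]; linarith
        have hfb' : 0 < g b' - l' := by rw [hl'def]; linarith
        have hfc' : g c' - l' < 0 := by rw [hl'def]; linarith
        have hs2 : HasSignChangesOn (fun μ => g μ - l) I 2 :=
          hasSignChanges_two' ha hb hc hab hbc
            (mul_neg_of_pos_of_neg hfa hfb) (mul_neg_of_neg_of_pos hfb hfc)
        have hs2' : HasSignChangesOn (fun μ => g μ - l') I 2 :=
          hasSignChanges_two' ha' hb' hc' hab' hbc'
            (mul_neg_of_neg_of_pos hfa' hfb') (mul_neg_of_pos_of_neg hfb' hfc')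
        have hnpn' : PatternNegPosNegOn (fun μ => g μ - l') I :=
          patternNPN_mk ha' hb' hc' hab' hbc' hfa' hfb' hfc'
        have hiff := hB l l' ⟨hs2, hA l⟩ ⟨hs2', hA l'⟩
        obtain ⟨x, hxI, hxm, p0, p1, p2⟩ := hiff.mpr hnpn'
        have hx01 : x 0 < x 1 := hxm (by decide)
        have hx12 : x 1 < x 2 := hxm (by decide)
        rcases lt_trichotomy (x 0) a with h | h | h
        · exact hA l (hasSignChanges_three' (hxI 0) ha hb hc h hab hbc
            (mul_neg_of_neg_of_pos p0 hfa) (mul_neg_of_pos_of_neg hfa hfb)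
            (mul_neg_of_neg_of_pos hfb hfc))
        · have : g a - l < 0 := by rw [← h]; exact p0
          linarith
        · exact hA l (hasSignChanges_three' ha (hxI 0) (hxI 1) (hxI 2) h hx01 hx12
            (mul_neg_of_pos_of_neg hfa p0) (mul_neg_of_neg_of_pos p0 p1)
            (mul_neg_of_pos_of_neg p1 p2))
      · -- no peak: apply the valley lemma to -g
        have H : ∀ a ∈ I, ∀ b ∈ I, ∀ c ∈ I, a < b → b < c →
            (fun x => -g x) a ≤ (fun x => -g x) b ∨ (fun x => -g x) c ≤ (fun x => -g x) b := by
          intro a ha b hb c hc hab hbc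
          by_contra hcon
          push_neg at hcon
          obtain ⟨h1, h2⟩ := hcon
          simp only [neg_lt_neg_iff] at h1 h2
          exact hP ⟨a, ha, b, hb, c, hc, hab, hbc, h1, h2⟩
        rcases unimodal_of_no_valley hI hg.neg H with h | h | ⟨μ₀, hμI, h1, h2⟩
        · exact Or.inr (Or.inl fun x hx y hy hxy => by
            have := h hx hy hxy; simp only [Pi.neg_apply] at this; linarith)
        · exact Or.inl fun x hx y hy hxy => by
            have := h hx hy hxy; simp only [Pi.neg_apply] at this; linarith
        · refine Or.inr (Or.inr ⟨μ₀, hμI, Or.inr ⟨?_, ?_⟩⟩)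
          · intro x hx y hy hxy
            have := h1 hx hy hxy; simp only [Pi.neg_apply] at this; linarith
          · intro x hx y hy hxy
            have := h2 hx hy hxy; simp only [Pi.neg_apply] at this; linarith
    · -- no valley
      have H : ∀ a ∈ I, ∀ b ∈ I, ∀ c ∈ I, a < b → b < c → g a ≤ g b ∨ g c ≤ g b := by
        intro a ha b hb c hc hab hbc
        by_contra hcon
        push_neg at hcon
        exact hV ⟨a, ha, b, hb, c, hc, hab, hbc, hcon.1, hcon.2⟩
      rcases unimodal_of_no_valley hI hg H with h | h | ⟨μ₀, hμI, h1, h2⟩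
      · exact Or.inl h
      · exact Or.inr (Or.inl h)
      · exact Or.inr (Or.inr ⟨μ₀, hμI, Or.inl ⟨h1, h2⟩⟩)
end

section
/- Let 0 < q < 1, let μ₁ < μ₂ be positive reals and i < j be nonnegative integers. Then the 2×2 determinant det( (q^{μ₁};q)ᵢ, (q^{μ₂};q)ᵢ ; (q^{μ₁};q)ⱼ, (q^{μ₂};q)ⱼ ) is strictly positive. -/
/-- The q-Pochhammer symbol `(a; q)_n = ∏_{k=0}^{n-1} (1 - a q^k)`. -/
def qPoch (a q : ℝ) (n : ℕ) : ℝ := ∏ k ∈ Finset.range n, (1 - a * q ^ k)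

theorem qPoch_kernel_TP2 (q : ℝ) (hq0 : 0 < q) (hq1 : q < 1)
    (μ₁ μ₂ : ℝ) (hμ0 : 0 < μ₁) (hμ : μ₁ < μ₂) (i j : ℕ) (hij : i < j) :
    0 < qPoch (q ^ μ₁) q i * qPoch (q ^ μ₂) q j
        - qPoch (q ^ μ₂) q i * qPoch (q ^ μ₁) q j := by
  have hμ0' : 0 < μ₂ := hμ0.trans hμ
  -- basic facts about q^μ
  have ha : ∀ μ : ℝ, 0 < μ → 0 < q ^ μ ∧ q ^ μ < 1 := fun μ hm =>
    ⟨Real.rpow_pos_of_pos hq0 μ, Real.rpow_lt_one hq0.le hq1 hm⟩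
  have hterm : ∀ μ : ℝ, 0 < μ → ∀ k : ℕ, 0 < 1 - q ^ μ * q ^ k := by
    intro μ hm k
    have h1 := ha μ hm
    have hk : q ^ k ≤ 1 := pow_le_one₀ hq0.le hq1.le
    have : q ^ μ * q ^ k < 1 := by
      calc q ^ μ * q ^ k ≤ q ^ μ * 1 := by
            exact mul_le_mul_of_nonneg_left hk h1.1.le
        _ = q ^ μ := mul_one _
        _ < 1 := h1.2
    linarith
  have hP : ∀ μ : ℝ, 0 < μ → 0 < qPoch (q ^ μ) q i := by
    intro μ hm
    exact Finset.prod_pos fun k _ => hterm μ hm k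
  -- factor qPoch at j through i
  have hfac : ∀ μ : ℝ, qPoch (q ^ μ) q j =
      qPoch (q ^ μ) q i * ∏ k ∈ Finset.Ico i j, (1 - q ^ μ * q ^ k) := by
    intro μ
    unfold qPoch
    rw [Finset.range_eq_Ico, Finset.range_eq_Ico]
    exact (Finset.prod_Ico_consecutive (fun k => 1 - q ^ μ * q ^ k) (Nat.zero_le i) hij.le).symm
  have hR : (∏ k ∈ Finset.Ico i j, (1 - q ^ μ₁ * q ^ k)) <
      ∏ k ∈ Finset.Ico i j, (1 - q ^ μ₂ * q ^ k) := by
    apply Finset.prod_lt_prod_of_nonempty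
    · intro k _; exact hterm μ₁ hμ0 k
    · intro k _
      have : q ^ μ₂ < q ^ μ₁ := Real.rpow_lt_rpow_of_exponent_gt hq0 hq1 hμ
      have hk : 0 < q ^ k := pow_pos hq0 k
      nlinarith
    · exact ⟨i, Finset.mem_Ico.mpr ⟨le_refl i, hij⟩⟩
  have h1 := hP μ₁ hμ0
  have h2 := hP μ₂ hμ0'
  rw [hfac μ₁, hfac μ₂]
  calc (0:ℝ) < qPoch (q ^ μ₁) q i * qPoch (q ^ μ₂) q i *
        ((∏ k ∈ Finset.Ico i j, (1 - q ^ μ₂ * q ^ k)) -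
          ∏ k ∈ Finset.Ico i j, (1 - q ^ μ₁ * q ^ k)) :=
        mul_pos (mul_pos h1 h2) (sub_pos.mpr hR)
    _ = qPoch (q ^ μ₁) q i * (qPoch (q ^ μ₂) q i * ∏ k ∈ Finset.Ico i j, (1 - q ^ μ₂ * q ^ k))
        - qPoch (q ^ μ₂) q i * (qPoch (q ^ μ₁) q i * ∏ k ∈ Finset.Ico i j, (1 - q ^ μ₁ * q ^ k)) := by
        ring
end

section
/- Let 0 < q < 1, let μ₃ > μ₂ > μ₁ > 0 be reals and s > j > i ≥ 1 be positive integers. Then the 3×3 determinant with (r,c) entry (q^{μ_c}; q)_{n_r}, where (n₁,n₂,n₃) = (i,j,s), is strictly positive. That is, the kernel K(μ,n) = (q^μ;q)ₙ is strictly totally positive of order 3 on (0,∞) × ℕ₀. -/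
open Finset Set

noncomputable def QPpr (q : ℝ) (A : Finset ℕ) (y : ℝ) : ℝ := ∏ k ∈ A, (1 - y * q ^ k)
noncomputable def QPsm (q : ℝ) (A : Finset ℕ) (y : ℝ) : ℝ := ∑ k ∈ A, q ^ k / (1 - y * q ^ k)
noncomputable def QPsm2 (q : ℝ) (A : Finset ℕ) (y : ℝ) : ℝ := ∑ k ∈ A, (q ^ k / (1 - y * q ^ k)) ^ 2

variable {q : ℝ}

lemma QP.fact_pos (hq0 : 0 < q) (hq1 : q < 1) {y : ℝ} (hy0 : 0 < y) (hy1 : y < 1) (k : ℕ) :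
    0 < 1 - y * q ^ k := by
  have h1 : q ^ k ≤ 1 := pow_le_one₀ hq0.le hq1.le
  have h2 : (0:ℝ) < q ^ k := pow_pos hq0 k
  nlinarith

lemma QP.pr_pos (hq0 : 0 < q) (hq1 : q < 1) {y : ℝ} (hy0 : 0 < y) (hy1 : y < 1) (A : Finset ℕ) :
    0 < QPpr q A y :=
  Finset.prod_pos fun k _ => QP.fact_pos hq0 hq1 hy0 hy1 k

lemma QP.sm_pos (hq0 : 0 < q) (hq1 : q < 1) {y : ℝ} (hy0 : 0 < y) (hy1 : y < 1)
    {A : Finset ℕ} (hA : A.Nonempty) : 0 < QPsm q A y :=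
  Finset.sum_pos (fun k _ => div_pos (pow_pos hq0 k) (QP.fact_pos hq0 hq1 hy0 hy1 k)) hA

lemma QP.hasDerivAt_pr (hq0 : 0 < q) (hq1 : q < 1) {y : ℝ} (hy0 : 0 < y) (hy1 : y < 1)
    (A : Finset ℕ) :
    HasDerivAt (QPpr q A) (-(QPpr q A y * QPsm q A y)) y := by
  classical
  induction A using Finset.induction_on with
  | empty =>
    rw [show QPpr q ∅ = fun _ => (1:ℝ) from funext fun z => by simp [QPpr]]
    simpa [QPpr, QPsm] using hasDerivAt_const y (1:ℝ)
  | insert a A ha ih =>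
    have hlin : HasDerivAt (fun y : ℝ => 1 - y * q ^ a) (-(q ^ a)) y := by
      simpa using ((hasDerivAt_id y).mul_const (q ^ a)).const_sub 1
    have h := hlin.fun_mul ih
    have hfa : (0:ℝ) < 1 - y * q ^ a := QP.fact_pos hq0 hq1 hy0 hy1 a
    have hfun : (fun y => (1 - y * q ^ a) * QPpr q A y) = QPpr q (insert a A) := by
      funext z
      simp [QPpr, Finset.prod_insert ha]
    rw [hfun] at h
    refine h.congr_deriv ?_
    simp only [QPpr, QPsm, Finset.prod_insert ha, Finset.sum_insert ha]
    field_simp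
    linear_combination (q ^ a * ∏ x ∈ A, (1 - y * q ^ x)) * mul_inv_cancel₀ hfa.ne'

lemma QP.hasDerivAt_sm (hq0 : 0 < q) (hq1 : q < 1) {y : ℝ} (hy0 : 0 < y) (hy1 : y < 1)
    (A : Finset ℕ) :
    HasDerivAt (QPsm q A) (QPsm2 q A y) y := by
  have : ∀ k ∈ A, HasDerivAt (fun y : ℝ => q ^ k / (1 - y * q ^ k))
      ((q ^ k / (1 - y * q ^ k)) ^ 2) y := by
    intro k _
    have hfa : (0:ℝ) < 1 - y * q ^ k := QP.fact_pos hq0 hq1 hy0 hy1 k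
    have hlin : HasDerivAt (fun y : ℝ => 1 - y * q ^ k) (-(q ^ k)) y := by
      simpa using ((hasDerivAt_id y).mul_const (q ^ k)).const_sub 1
    have h := (hlin.inv hfa.ne').const_mul (q ^ k)
    have hval : q ^ k * (-(-(q ^ k)) / (1 - y * q ^ k) ^ 2) = (q ^ k / (1 - y * q ^ k)) ^ 2 := by
      field_simp
    rw [hval] at h
    simpa [div_eq_mul_inv] using h
  exact HasDerivAt.fun_sum this

/-- The slope function `R(y) = w(y) * (u(y)+v(y)) / u(y)`. -/
noncomputable def QPR (q : ℝ) (i j s : ℕ) (y : ℝ) : ℝ :=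
  QPpr q (Finset.Ico j s) y * (QPsm q (Finset.Ico i j) y + QPsm q (Finset.Ico j s) y) /
    QPsm q (Finset.Ico i j) y

lemma QP.h_le (hq0 : 0 < q) (hq1 : q < 1) {y : ℝ} (hy0 : 0 < y) (hy1 : y < 1)
    {k l : ℕ} (hkl : k ≤ l) :
    q ^ l / (1 - y * q ^ l) ≤ q ^ k / (1 - y * q ^ k) := by
  have h1 : q ^ l ≤ q ^ k := pow_le_pow_of_le_one hq0.le hq1.le hkl
  have h2 : (0:ℝ) < 1 - y * q ^ k := QP.fact_pos hq0 hq1 hy0 hy1 k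
  have h3 : 1 - y * q ^ k ≤ 1 - y * q ^ l := by nlinarith
  gcongr

lemma QP.hasDerivAt_R (hq0 : 0 < q) (hq1 : q < 1) {y : ℝ} (hy0 : 0 < y) (hy1 : y < 1)
    {i j s : ℕ} (hij : i < j) (hjs : j < s) :
    ∃ d : ℝ, d < 0 ∧ HasDerivAt (QPR q i j s) d y := by
  set S := Finset.Ico i j with hS
  set L := Finset.Ico j s with hL
  have hSne : S.Nonempty := by rw [hS]; exact Finset.nonempty_Ico.2 hij
  have hLne : L.Nonempty := by rw [hL]; exact Finset.nonempty_Ico.2 hjs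
  set w := QPpr q L y
  set u := QPsm q S y
  set v := QPsm q L y
  set u2 := QPsm2 q S y
  set v2 := QPsm2 q L y
  have hw : 0 < w := QP.pr_pos hq0 hq1 hy0 hy1 L
  have hu : 0 < u := QP.sm_pos hq0 hq1 hy0 hy1 hSne
  have hv : 0 < v := QP.sm_pos hq0 hq1 hy0 hy1 hLne
  have hnum : HasDerivAt (fun y => QPpr q L y * (QPsm q S y + QPsm q L y))
      (-(w * v) * (u + v) + w * (u2 + v2)) y :=
    (QP.hasDerivAt_pr hq0 hq1 hy0 hy1 L).mul
      ((QP.hasDerivAt_sm hq0 hq1 hy0 hy1 S).add (QP.hasDerivAt_sm hq0 hq1 hy0 hy1 L))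
  have hR : HasDerivAt (QPR q i j s)
      (((-(w * v) * (u + v) + w * (u2 + v2)) * u - w * (u + v) * u2) / u ^ 2) y :=
    hnum.div (QP.hasDerivAt_sm hq0 hq1 hy0 hy1 S) hu.ne'
  refine ⟨_, ?_, hR⟩
  -- key comparison: u * v2 ≤ v * u2
  have hkey : u * v2 ≤ v * u2 := by
    have h1 : u * v2 = ∑ k ∈ S, ∑ l ∈ L, (q ^ k / (1 - y * q ^ k)) * (q ^ l / (1 - y * q ^ l)) ^ 2 :=
      Finset.sum_mul_sum S L _ _
    have h2 : v * u2 = ∑ l ∈ L, ∑ k ∈ S, (q ^ l / (1 - y * q ^ l)) * (q ^ k / (1 - y * q ^ k)) ^ 2 :=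
      Finset.sum_mul_sum L S _ _
    rw [h1, h2, Finset.sum_comm (s := S) (t := L)]
    refine Finset.sum_le_sum fun l hl => Finset.sum_le_sum fun k hk => ?_
    have hkl : k ≤ l := by
      rw [hS] at hk; rw [hL] at hl
      exact le_trans (Finset.mem_Ico.1 hk).2.le (Finset.mem_Ico.1 hl).1
    have hle := QP.h_le hq0 hq1 hy0 hy1 hkl
    have hlpos : 0 < q ^ l / (1 - y * q ^ l) :=
      div_pos (pow_pos hq0 l) (QP.fact_pos hq0 hq1 hy0 hy1 l)
    have hApos : 0 < q ^ k / (1 - y * q ^ k) := lt_of_lt_of_le hlpos hle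
    have hmul := mul_le_mul_of_nonneg_left hle (mul_nonneg hApos.le hlpos.le)
    nlinarith [hmul]
  have hnumneg : (-(w * v) * (u + v) + w * (u2 + v2)) * u - w * (u + v) * u2 < 0 := by
    have : (-(w * v) * (u + v) + w * (u2 + v2)) * u - w * (u + v) * u2
        = w * ((u * v2 - v * u2) - u * v * (u + v)) := by ring
    rw [this]
    have h4 : 0 < u * v * (u + v) := by positivity
    nlinarith
  exact div_neg_of_neg_of_pos hnumneg (by positivity)

lemma QP.strictAntiOn_R (hq0 : 0 < q) (hq1 : q < 1) {a b : ℝ} (ha : 0 < a) (hb : b < 1)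
    (hab : a < b) {i j s : ℕ} (hij : i < j) (hjs : j < s) :
    StrictAntiOn (QPR q i j s) (Icc a b) := by
  have hmem : ∀ x ∈ Icc a b, 0 < x ∧ x < 1 := fun x hx =>
    ⟨lt_of_lt_of_le ha hx.1, lt_of_le_of_lt hx.2 hb⟩
  refine strictAntiOn_of_deriv_neg (convex_Icc a b) ?_ ?_
  · intro x hx
    obtain ⟨hx0, hx1⟩ := hmem x hx
    obtain ⟨d, _, hd⟩ := QP.hasDerivAt_R hq0 hq1 hx0 hx1 hij hjs
    exact hd.continuousAt.continuousWithinAt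
  · intro x hx
    rw [interior_Icc] at hx
    obtain ⟨hx0, hx1⟩ := hmem x ⟨hx.1.le, hx.2.le⟩
    obtain ⟨d, hdneg, hd⟩ := QP.hasDerivAt_R hq0 hq1 hx0 hx1 hij hjs
    rw [hd.deriv]
    exact hdneg

lemma QP.exists_slope (hq0 : 0 < q) (hq1 : q < 1) {a b : ℝ} (ha : 0 < a) (hb : b < 1)
    (hab : a < b) {i j s : ℕ} (hij : i < j) (hjs : j < s) :
    ∃ ξ ∈ Ioo a b,
      QPpr q (Finset.Ico i s) a - QPpr q (Finset.Ico i s) b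
        = (QPpr q (Finset.Ico i j) a - QPpr q (Finset.Ico i j) b) * QPR q i j s ξ := by
  have hmem : ∀ x, x ∈ Icc a b → 0 < x ∧ x < 1 := fun x hx =>
    ⟨lt_of_lt_of_le ha hx.1, lt_of_le_of_lt hx.2 hb⟩
  have hmem' : ∀ x, x ∈ Ioo a b → 0 < x ∧ x < 1 := fun x hx =>
    hmem x ⟨hx.1.le, hx.2.le⟩
  have hcontF : ContinuousOn (QPpr q (Finset.Ico i s)) (Icc a b) := by
    intro x hx
    obtain ⟨h0, h1⟩ := hmem x hx
    exact (QP.hasDerivAt_pr hq0 hq1 h0 h1 _).continuousAt.continuousWithinAt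
  have hcontG : ContinuousOn (QPpr q (Finset.Ico i j)) (Icc a b) := by
    intro x hx
    obtain ⟨h0, h1⟩ := hmem x hx
    exact (QP.hasDerivAt_pr hq0 hq1 h0 h1 _).continuousAt.continuousWithinAt
  obtain ⟨ξ, hξ, heq⟩ := exists_ratio_hasDerivAt_eq_ratio_slope
    (QPpr q (Finset.Ico i s))
    (fun x => -(QPpr q (Finset.Ico i s) x * QPsm q (Finset.Ico i s) x))
    hab hcontF
    (fun x hx => (QP.hasDerivAt_pr hq0 hq1 (hmem' x hx).1 (hmem' x hx).2 _))
    (QPpr q (Finset.Ico i j))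
    (fun x => -(QPpr q (Finset.Ico i j) x * QPsm q (Finset.Ico i j) x))
    hcontG
    (fun x hx => (QP.hasDerivAt_pr hq0 hq1 (hmem' x hx).1 (hmem' x hx).2 _))
  obtain ⟨hξ0, hξ1⟩ := hmem' ξ hξ
  have hgpp : 0 < QPpr q (Finset.Ico i j) ξ := QP.pr_pos hq0 hq1 hξ0 hξ1 _
  have hup : 0 < QPsm q (Finset.Ico i j) ξ :=
    QP.sm_pos hq0 hq1 hξ0 hξ1 (Finset.nonempty_Ico.2 hij)
  have hsplitP : QPpr q (Finset.Ico i s) ξ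
      = QPpr q (Finset.Ico i j) ξ * QPpr q (Finset.Ico j s) ξ := by
    simp only [QPpr]
    exact (Finset.prod_Ico_consecutive _ hij.le hjs.le).symm
  have hsplitS : QPsm q (Finset.Ico i s) ξ
      = QPsm q (Finset.Ico i j) ξ + QPsm q (Finset.Ico j s) ξ := by
    simp only [QPsm]
    exact (Finset.sum_Ico_consecutive _ hij.le hjs.le).symm
  rw [hsplitP, hsplitS] at heq
  refine ⟨ξ, hξ, ?_⟩
  rw [QPR, ← mul_div_assoc, eq_div_iff hup.ne']
  apply mul_left_cancel₀ hgpp.ne'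
  linear_combination -heq

lemma QP.pr_lt (hq0 : 0 < q) (hq1 : q < 1) {x z : ℝ} (hx : 0 < x) (hz1 : z < 1)
    (hxz : x < z) {A : Finset ℕ} (hA : A.Nonempty) : QPpr q A z < QPpr q A x := by
  refine Finset.prod_lt_prod_of_nonempty ?_ ?_ hA
  · exact fun k _ => QP.fact_pos hq0 hq1 (hx.trans hxz) hz1 k
  · intro k _
    have := mul_lt_mul_of_pos_right hxz (pow_pos hq0 k)
    linarith

lemma QP.qPoch_factor (y : ℝ) {m n : ℕ} (hmn : m ≤ n) :
    qPoch y q n = qPoch y q m * QPpr q (Finset.Ico m n) y := by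
  simp only [qPoch, QPpr, ← Nat.Ico_zero_eq_range]
  exact (Finset.prod_Ico_consecutive _ (Nat.zero_le m) hmn).symm

lemma QP.qPoch_pos (hq0 : 0 < q) (hq1 : q < 1) {y : ℝ} (hy0 : 0 < y) (hy1 : y < 1) (n : ℕ) :
    0 < qPoch y q n :=
  Finset.prod_pos fun k _ => QP.fact_pos hq0 hq1 hy0 hy1 k

lemma QP.det_pos (p₁ p₂ p₃ g₁ g₂ g₃ G₁ G₂ G₃ : ℝ)
    (hp₁ : 0 < p₁) (hp₂ : 0 < p₂) (hp₃ : 0 < p₃)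
    (hE : 0 < (g₂ - g₁) * (G₃ - G₂) - (g₃ - g₂) * (G₂ - G₁)) :
    0 < Matrix.det !![p₁, p₂, p₃;
                      p₁ * g₁, p₂ * g₂, p₃ * g₃;
                      p₁ * G₁, p₂ * G₂, p₃ * G₃] := by
  calc (0:ℝ) < p₁ * p₂ * p₃ * ((g₂ - g₁) * (G₃ - G₂) - (g₃ - g₂) * (G₂ - G₁)) := by positivity
    _ = Matrix.det !![p₁, p₂, p₃;
                      p₁ * g₁, p₂ * g₂, p₃ * g₃;
                      p₁ * G₁, p₂ * G₂, p₃ * G₃] := by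
        simp [Matrix.det_fin_three]
        ring

theorem qPoch_kernel_STP3 (q : ℝ) (hq0 : 0 < q) (hq1 : q < 1)
    (μ₁ μ₂ μ₃ : ℝ) (hμ0 : 0 < μ₁) (hμ12 : μ₁ < μ₂) (hμ23 : μ₂ < μ₃)
    (i j s : ℕ) (hi : 1 ≤ i) (hij : i < j) (hjs : j < s) :
    0 < Matrix.det
        !![qPoch (q ^ μ₁) q i, qPoch (q ^ μ₂) q i, qPoch (q ^ μ₃) q i;
           qPoch (q ^ μ₁) q j, qPoch (q ^ μ₂) q j, qPoch (q ^ μ₃) q j;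
           qPoch (q ^ μ₁) q s, qPoch (q ^ μ₂) q s, qPoch (q ^ μ₃) q s] := by
  set y₁ := q ^ μ₁ with hy₁def
  set y₂ := q ^ μ₂ with hy₂def
  set y₃ := q ^ μ₃ with hy₃def
  have hy₁1 : y₁ < 1 := Real.rpow_lt_one hq0.le hq1 hμ0
  have hy₂₁ : y₂ < y₁ := Real.rpow_lt_rpow_of_exponent_gt hq0 hq1 hμ12
  have hy₃₂ : y₃ < y₂ := Real.rpow_lt_rpow_of_exponent_gt hq0 hq1 hμ23
  have hy₃0 : 0 < y₃ := Real.rpow_pos_of_pos hq0 _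
  have hy₂0 : 0 < y₂ := hy₃0.trans hy₃₂
  have hy₁0 : 0 < y₁ := hy₂0.trans hy₂₁
  have hy₂1 : y₂ < 1 := hy₂₁.trans hy₁1
  have hy₃1 : y₃ < 1 := hy₃₂.trans hy₂1
  have his : i ≤ s := (hij.trans hjs).le
  -- rewrite the matrix entries
  rw [QP.qPoch_factor y₁ hij.le, QP.qPoch_factor y₂ hij.le, QP.qPoch_factor y₃ hij.le,
      QP.qPoch_factor y₁ his, QP.qPoch_factor y₂ his, QP.qPoch_factor y₃ his]
  -- the slope inequalities
  obtain ⟨ξa, hξa, hslopea⟩ := QP.exists_slope hq0 hq1 hy₃0 hy₂1 hy₃₂ hij hjs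
  obtain ⟨ξb, hξb, hslopeb⟩ := QP.exists_slope hq0 hq1 hy₂0 hy₁1 hy₂₁ hij hjs
  have hanti := QP.strictAntiOn_R hq0 hq1 hy₃0 hy₁1 (hy₃₂.trans hy₂₁) hij hjs
  have hξaI : ξa ∈ Icc y₃ y₁ := ⟨hξa.1.le, (hξa.2.trans hy₂₁).le⟩
  have hξbI : ξb ∈ Icc y₃ y₁ := ⟨(hy₃₂.trans hξb.1).le, hξb.2.le⟩
  have hRlt : QPR q i j s ξb < QPR q i j s ξa :=
    hanti hξaI hξbI (hξa.2.trans hξb.1)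
  have hg21 : 0 < QPpr q (Finset.Ico i j) y₂ - QPpr q (Finset.Ico i j) y₁ :=
    sub_pos.2 (QP.pr_lt hq0 hq1 hy₂0 hy₁1 hy₂₁ (Finset.nonempty_Ico.2 hij))
  have hg32 : 0 < QPpr q (Finset.Ico i j) y₃ - QPpr q (Finset.Ico i j) y₂ :=
    sub_pos.2 (QP.pr_lt hq0 hq1 hy₃0 hy₂1 hy₃₂ (Finset.nonempty_Ico.2 hij))
  have hE : 0 < (QPpr q (Finset.Ico i j) y₂ - QPpr q (Finset.Ico i j) y₁)
      * (QPpr q (Finset.Ico i s) y₃ - QPpr q (Finset.Ico i s) y₂)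
      - (QPpr q (Finset.Ico i j) y₃ - QPpr q (Finset.Ico i j) y₂)
      * (QPpr q (Finset.Ico i s) y₂ - QPpr q (Finset.Ico i s) y₁) := by
    rw [hslopea, hslopeb]
    have heq : (QPpr q (Finset.Ico i j) y₂ - QPpr q (Finset.Ico i j) y₁)
        * ((QPpr q (Finset.Ico i j) y₃ - QPpr q (Finset.Ico i j) y₂) * QPR q i j s ξa)
        - (QPpr q (Finset.Ico i j) y₃ - QPpr q (Finset.Ico i j) y₂)
        * ((QPpr q (Finset.Ico i j) y₂ - QPpr q (Finset.Ico i j) y₁) * QPR q i j s ξb)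
        = (QPpr q (Finset.Ico i j) y₂ - QPpr q (Finset.Ico i j) y₁)
        * (QPpr q (Finset.Ico i j) y₃ - QPpr q (Finset.Ico i j) y₂)
        * (QPR q i j s ξa - QPR q i j s ξb) := by ring
    rw [heq]
    exact mul_pos (mul_pos hg21 hg32) (sub_pos.2 hRlt)
  exact QP.det_pos _ _ _ _ _ _ _ _ _
    (QP.qPoch_pos hq0 hq1 hy₁0 hy₁1 i) (QP.qPoch_pos hq0 hq1 hy₂0 hy₂1 i)
    (QP.qPoch_pos hq0 hq1 hy₃0 hy₃1 i) hE
end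

section
/- Let 0 < q < 1, let μ₃ > μ₂ > μ₁ > 0 be reals and s > j > i ≥ 1 be positive integers. Then the 3×3 determinant with (r,c) entry 1/(q^{μ_c}; q)_{n_r}, where (n₁,n₂,n₃) = (i,j,s), is strictly negative. -/
namespace IQP

variable {q w v u : ℝ}

/-- single factor -/
noncomputable def h (q y : ℝ) (k : ℕ) : ℝ := (1 - y * q ^ k)⁻¹

noncomputable def Φ (q y : ℝ) (S : Finset ℕ) : ℝ := ∏ k ∈ S, h q y k

lemma den_pos (hq0 : 0 < q) (hq1 : q < 1) {y : ℝ} (hy0 : 0 < y) (hy1 : y < 1) (k : ℕ) :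
    0 < 1 - y * q ^ k := by
  have h1 : q ^ k ≤ 1 := pow_le_one₀ hq0.le hq1.le
  nlinarith

lemma h_pos (hq0 : 0 < q) (hq1 : q < 1) {y : ℝ} (hy0 : 0 < y) (hy1 : y < 1) (k : ℕ) :
    0 < h q y k := inv_pos.2 (den_pos hq0 hq1 hy0 hy1 k)

lemma h_lt (hq0 : 0 < q) (hq1 : q < 1) {y y' : ℝ} (hy0 : 0 < y) (hyy : y < y') (hy1 : y' < 1)
    (k : ℕ) : h q y k < h q y' k := by
  have hp := den_pos hq0 hq1 (hy0.trans hyy) hy1 k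
  have hqk : 0 < q ^ k := pow_pos hq0 k
  exact inv_strictAnti₀ hp (by nlinarith)

lemma h_diff (hq0 : 0 < q) (hq1 : q < 1) {y y' : ℝ} (hy0 : 0 < y) (hyy : y < y') (hy1 : y' < 1)
    (k : ℕ) : h q y' k - h q y k = (y' - y) * q ^ k * (h q y k * h q y' k) := by
  have h1 := (den_pos hq0 hq1 hy0 (hyy.trans hy1) k).ne'
  have h2 := (den_pos hq0 hq1 (hy0.trans hyy) hy1 k).ne'
  unfold h
  rw [inv_sub_inv h2 h1, div_eq_mul_inv, mul_inv]
  ring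

lemma Φ_pos (hq0 : 0 < q) (hq1 : q < 1) {y : ℝ} (hy0 : 0 < y) (hy1 : y < 1) (S : Finset ℕ) :
    0 < Φ q y S :=
  Finset.prod_pos fun k _ => h_pos hq0 hq1 hy0 hy1 k

lemma Φ_lt (hq0 : 0 < q) (hq1 : q < 1) {y y' : ℝ} (hy0 : 0 < y) (hyy : y < y') (hy1 : y' < 1)
    {S : Finset ℕ} (hS : S.Nonempty) : Φ q y S < Φ q y' S :=
  Finset.prod_lt_prod_of_nonempty (fun k _ => h_pos hq0 hq1 hy0 (hyy.trans hy1) k)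
    (fun k _ => h_lt hq0 hq1 hy0 hyy hy1 k) hS

/-- base case: single factor on each side -/
lemma base (hq0 : 0 < q) (hq1 : q < 1) (hw0 : 0 < w) (hwv : w < v) (hvu : v < u) (hu1 : u < 1)
    (a m : ℕ) :
    h q w a * (h q u a - h q v a) * (h q v m - h q w m) <
    h q u a * (h q v a - h q w a) * (h q u m - h q v m) := by
  have hv0 : 0 < v := hw0.trans hwv
  have hv1 : v < 1 := hvu.trans hu1
  have hw1 : w < 1 := hwv.trans hv1
  have hu0 : 0 < u := hv0.trans hvu
  have e1 := h_diff hq0 hq1 hv0 hvu hu1 a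
  have e2 := h_diff hq0 hq1 hw0 hwv hv1 a
  have e3 := h_diff hq0 hq1 hw0 hwv hv1 m
  have e4 := h_diff hq0 hq1 hv0 hvu hu1 m
  rw [e1, e2, e3, e4]
  have P : 0 < h q w a * h q v a * h q u a * q ^ a * q ^ m * (v - w) * (u - v) * h q v m := by
    have := h_pos hq0 hq1 hw0 hw1 a
    have := h_pos hq0 hq1 hv0 hv1 a
    have := h_pos hq0 hq1 hu0 hu1 a
    have := h_pos hq0 hq1 hv0 hv1 m
    have := pow_pos hq0 a
    have := pow_pos hq0 m
    have h1 : (0:ℝ) < v - w := by linarith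
    have h2 : (0:ℝ) < u - v := by linarith
    positivity
  have hm : h q w m < h q u m := (h_lt hq0 hq1 hw0 hwv hv1 m).trans (h_lt hq0 hq1 hv0 hvu hu1 m)
  nlinarith [mul_lt_mul_of_pos_left hm P]

lemma Φ_cons (q y : ℝ) (a : ℕ) (S : Finset ℕ) (ha : a ∉ S) :
    Φ q y (Finset.cons a S ha) = h q y a * Φ q y S := Finset.prod_cons _

variable (hq0 : 0 < q) (hq1 : q < 1) (hw0 : 0 < w) (hwv : w < v) (hvu : v < u) (hu1 : u < 1)

include hq0 hq1 hw0 hwv hvu hu1 in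
lemma claim1 {S : Finset ℕ} (hS : S.Nonempty) (m : ℕ) :
    Φ q w S * (Φ q u S - Φ q v S) * (h q v m - h q w m) <
    Φ q u S * (Φ q v S - Φ q w S) * (h q u m - h q v m) := by
  have hv0 : 0 < v := hw0.trans hwv
  have hv1 : v < 1 := hvu.trans hu1
  have hw1 : w < 1 := hwv.trans hv1
  have hu0 : 0 < u := hv0.trans hvu
  induction hS using Finset.Nonempty.cons_induction with
  | singleton a => simpa [Φ] using base hq0 hq1 hw0 hwv hvu hu1 a m
  | cons a S ha hS ih =>
    have hbase := base hq0 hq1 hw0 hwv hvu hu1 a m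
    rw [Φ_cons, Φ_cons, Φ_cons]
    set gw := h q w a; set gv := h q v a; set gu := h q u a
    set Bw := Φ q w S; set Bv := Φ q v S; set Bu := Φ q u S
    set Hw := h q w m; set Hv := h q v m; set Hu := h q u m
    have hgw : 0 < gw := h_pos hq0 hq1 hw0 hw1 a
    have hgv : 0 < gv := h_pos hq0 hq1 hv0 hv1 a
    have hgu : 0 < gu := h_pos hq0 hq1 hu0 hu1 a
    have hgwv : gw < gv := h_lt hq0 hq1 hw0 hwv hv1 a
    have hgvu : gv < gu := h_lt hq0 hq1 hv0 hvu hu1 a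
    have hBw : 0 < Bw := Φ_pos hq0 hq1 hw0 hw1 S
    have hBwv : Bw < Bv := Φ_lt hq0 hq1 hw0 hwv hv1 hS
    have hBvu : Bv < Bu := Φ_lt hq0 hq1 hv0 hvu hu1 hS
    have hBv : 0 < Bv := hBw.trans hBwv
    have hBu : 0 < Bu := hBv.trans hBvu
    have hHwv : Hw < Hv := h_lt hq0 hq1 hw0 hwv hv1 m
    have hHvu : Hv < Hu := h_lt hq0 hq1 hv0 hvu hu1 m
    have Ypos : 0 < Bw * (Bu - Bv) * (Hv - Hw) :=
      mul_pos (mul_pos hBw (by linarith)) (by linarith)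
    have bpos : 0 < gw * (gu - gv) * (Hv - Hw) :=
      mul_pos (mul_pos hgw (by linarith)) (by linarith)
    have h1 : gu * gw * (Bw * (Bu - Bv) * (Hv - Hw)) <
        gu * gv * (Bu * (Bv - Bw) * (Hu - Hv)) := by
      nlinarith [mul_pos (mul_pos hgu hgv) (sub_pos.2 ih),
        mul_pos (mul_pos hgu Ypos) (sub_pos.2 hgwv)]
    have h2 : Bw * Bv * (gw * (gu - gv) * (Hv - Hw)) <
        Bw * Bu * (gu * (gv - gw) * (Hu - Hv)) := by
      nlinarith [mul_pos (mul_pos hBw hBu) (sub_pos.2 hbase),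
        mul_pos (mul_pos hBw bpos) (sub_pos.2 hBvu)]
    nlinarith [h1, h2]

include hq0 hq1 hw0 hwv hvu hu1 in
lemma main {S T : Finset ℕ} (hS : S.Nonempty) (hT : T.Nonempty) :
    Φ q w S * (Φ q u S - Φ q v S) * (Φ q v T - Φ q w T) <
    Φ q u S * (Φ q v S - Φ q w S) * (Φ q u T - Φ q v T) := by
  have hv0 : 0 < v := hw0.trans hwv
  have hv1 : v < 1 := hvu.trans hu1
  have hw1 : w < 1 := hwv.trans hv1
  have hu0 : 0 < u := hv0.trans hvu
  induction hT using Finset.Nonempty.cons_induction with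
  | singleton m => simpa [Φ] using claim1 hq0 hq1 hw0 hwv hvu hu1 hS m
  | cons m T hm hT ih =>
    have hc1 := claim1 hq0 hq1 hw0 hwv hvu hu1 hS m
    rw [Φ_cons, Φ_cons, Φ_cons]
    set hw := h q w m; set hv := h q v m; set hu := h q u m
    set Bw := Φ q w S; set Bv := Φ q v S; set Bu := Φ q u S
    set Cw := Φ q w T; set Cv := Φ q v T; set Cu := Φ q u T
    have hhw : 0 < hw := h_pos hq0 hq1 hw0 hw1 m
    have hhv : 0 < hv := h_pos hq0 hq1 hv0 hv1 m
    have hhu : 0 < hu := h_pos hq0 hq1 hu0 hu1 m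
    have hhwv : hw < hv := h_lt hq0 hq1 hw0 hwv hv1 m
    have hhvu : hv < hu := h_lt hq0 hq1 hv0 hvu hu1 m
    have hBw : 0 < Bw := Φ_pos hq0 hq1 hw0 hw1 S
    have hBwv : Bw < Bv := Φ_lt hq0 hq1 hw0 hwv hv1 hS
    have hBvu : Bv < Bu := Φ_lt hq0 hq1 hv0 hvu hu1 hS
    have hCw : 0 < Cw := Φ_pos hq0 hq1 hw0 hw1 T
    have hCwv : Cw < Cv := Φ_lt hq0 hq1 hw0 hwv hv1 hT
    have hCvu : Cv < Cu := Φ_lt hq0 hq1 hv0 hvu hu1 hT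
    have hCv : 0 < Cv := hCw.trans hCwv
    have Ypos : 0 < Bw * (Bu - Bv) * (Cv - Cw) :=
      mul_pos (mul_pos hBw (by linarith)) (by linarith)
    have bpos : 0 < Bw * (Bu - Bv) * (hv - hw) :=
      mul_pos (mul_pos hBw (by linarith)) (by linarith)
    have h1 : hv * (Bw * (Bu - Bv) * (Cv - Cw)) < hu * (Bu * (Bv - Bw) * (Cu - Cv)) := by
      nlinarith [mul_pos hhu (sub_pos.2 ih), mul_pos Ypos (sub_pos.2 hhvu)]
    have h2 : Cw * (Bw * (Bu - Bv) * (hv - hw)) < Cv * (Bu * (Bv - Bw) * (hu - hv)) := by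
      nlinarith [mul_pos hCv (sub_pos.2 hc1), mul_pos bpos (sub_pos.2 hCwv)]
    nlinarith [h1, h2]

end IQP
theorem inv_qPoch_kernel_det3_neg (q : ℝ) (hq0 : 0 < q) (hq1 : q < 1)
    (μ₁ μ₂ μ₃ : ℝ) (hμ0 : 0 < μ₁) (hμ12 : μ₁ < μ₂) (hμ23 : μ₂ < μ₃)
    (i j s : ℕ) (hi : 1 ≤ i) (hij : i < j) (hjs : j < s) :
    Matrix.det
        !![(qPoch (q ^ μ₁) q i)⁻¹, (qPoch (q ^ μ₂) q i)⁻¹, (qPoch (q ^ μ₃) q i)⁻¹;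
           (qPoch (q ^ μ₁) q j)⁻¹, (qPoch (q ^ μ₂) q j)⁻¹, (qPoch (q ^ μ₃) q j)⁻¹;
           (qPoch (q ^ μ₁) q s)⁻¹, (qPoch (q ^ μ₂) q s)⁻¹, (qPoch (q ^ μ₃) q s)⁻¹] < 0 := by
  set u := q ^ μ₁ with hu_def
  set v := q ^ μ₂ with hv_def
  set w := q ^ μ₃ with hw_def
  have hw0 : 0 < w := Real.rpow_pos_of_pos hq0 _
  have hwv : w < v := Real.rpow_lt_rpow_of_exponent_gt hq0 hq1 hμ23
  have hvu : v < u := Real.rpow_lt_rpow_of_exponent_gt hq0 hq1 hμ12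
  have hu1 : u < 1 := Real.rpow_lt_one hq0.le hq1 hμ0
  have hv0 : 0 < v := hw0.trans hwv
  have hu0 : 0 < u := hv0.trans hvu
  have hv1 : v < 1 := hvu.trans hu1
  have hw1 : w < 1 := hwv.trans hv1
  have hSne : (Finset.Ico i j).Nonempty := Finset.nonempty_Ico.2 hij
  have hTne : (Finset.Ico j s).Nonempty := Finset.nonempty_Ico.2 hjs
  have key := IQP.main hq0 hq1 hw0 hwv hvu hu1 hSne hTne
  have e1 : ∀ y : ℝ, (qPoch y q i)⁻¹ = IQP.Φ q y (Finset.range i) := by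
    intro y; simp [qPoch, IQP.Φ, IQP.h]
  have esplit : ∀ (y : ℝ) (m n : ℕ), m ≤ n →
      IQP.Φ q y (Finset.range n) = IQP.Φ q y (Finset.range m) * IQP.Φ q y (Finset.Ico m n) := by
    intro y m n hmn
    exact (Finset.prod_range_mul_prod_Ico _ hmn).symm
  have e2 : ∀ y : ℝ, (qPoch y q j)⁻¹ =
      IQP.Φ q y (Finset.range i) * IQP.Φ q y (Finset.Ico i j) := by
    intro y
    rw [show (qPoch y q j)⁻¹ = IQP.Φ q y (Finset.range j) by simp [qPoch, IQP.Φ, IQP.h],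
      esplit y i j hij.le]
  have e3 : ∀ y : ℝ, (qPoch y q s)⁻¹ =
      IQP.Φ q y (Finset.range i) * IQP.Φ q y (Finset.Ico i j) * IQP.Φ q y (Finset.Ico j s) := by
    intro y
    rw [show (qPoch y q s)⁻¹ = IQP.Φ q y (Finset.range s) by simp [qPoch, IQP.Φ, IQP.h],
      esplit y j s hjs.le, esplit y i j hij.le, mul_assoc]
  simp only [Matrix.det_fin_three, Matrix.of_apply, Matrix.cons_val', Matrix.cons_val_zero,
    Matrix.empty_val', Matrix.cons_val_fin_one, Matrix.cons_val_one, Matrix.head_cons,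
    Matrix.head_fin_const, Matrix.cons_val_two, Matrix.tail_cons, Matrix.head_val']
  rw [e1 u, e1 v, e1 w, e2 u, e2 v, e2 w, e3 u, e3 v, e3 w]
  set Au := IQP.Φ q u (Finset.range i)
  set Av := IQP.Φ q v (Finset.range i)
  set Aw := IQP.Φ q w (Finset.range i)
  set Bu := IQP.Φ q u (Finset.Ico i j)
  set Bv := IQP.Φ q v (Finset.Ico i j)
  set Bw := IQP.Φ q w (Finset.Ico i j)
  set Cu := IQP.Φ q u (Finset.Ico j s)
  set Cv := IQP.Φ q v (Finset.Ico j s)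
  set Cw := IQP.Φ q w (Finset.Ico j s)
  have hAu : 0 < Au := IQP.Φ_pos hq0 hq1 hu0 hu1 _
  have hAv : 0 < Av := IQP.Φ_pos hq0 hq1 hv0 hv1 _
  have hAw : 0 < Aw := IQP.Φ_pos hq0 hq1 hw0 hw1 _
  have hA : 0 < Au * Av * Aw := mul_pos (mul_pos hAu hAv) hAw
  nlinarith [mul_pos hA (sub_pos.2 key)]
end

section
/- The kernel K(x,y) = x^y is strictly totally positive of every order on (0,∞) × ℝ: for any m ≥ 1, any 0 < x₁ < x₂ < ... < xₘ and any real y₁ < y₂ < ... < yₘ, the determinant det(xᵢ^{yⱼ})_{i,j=1}^m is strictly positive. -/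
open Filter Topology Real Finset Matrix



lemma strictMono_from_ioo {m : ℕ} {x : Fin (m+1) → ℝ} (hx : StrictMono x)
    {w : Fin m → ℝ} (hw : ∀ i, w i ∈ Set.Ioo (x i.castSucc) (x i.succ)) : StrictMono w := by
  intro i j hij
  have h1 : w i < x i.succ := (hw i).2
  have h2 : x j.castSucc < w j := (hw j).1
  have : x i.succ ≤ x j.castSucc := hx.monotone (Fin.succ_le_castSucc_iff.mpr hij)
  linarith

lemma key_zero : ∀ m (y : Fin m → ℝ), StrictMono y → ∀ c : Fin m → ℝ,
    ∀ z : Fin m → ℝ, StrictMono z → (∀ i, 0 < z i) →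
    (∀ i, ∑ j, c j * (z i) ^ (y j) = 0) → c = 0 := by
  intro m
  induction m with
  | zero => intro _ _ c _ _ _ _; exact Subsingleton.elim _ _
  | succ m ih =>
    intro y hy c z hz hz0 hzero
    -- g t = ∑ j, c j * t ^ (y j - y 0)
    set g : ℝ → ℝ := fun t => ∑ j, c j * t ^ (y j - y 0) with hg
    have hgz : ∀ i, g (z i) = 0 := by
      intro i
      have hzi := hz0 i
      have : g (z i) = (∑ j, c j * (z i) ^ (y j)) / (z i) ^ (y 0) := by
        rw [Finset.sum_div]
        refine Finset.sum_congr rfl fun j _ => ?_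
        rw [Real.rpow_sub hzi, mul_div_assoc]
      rw [this, hzero i, zero_div]
    set g' : ℝ → ℝ := fun t => ∑ j, c j * ((y j - y 0) * t ^ (y j - y 0 - 1)) with hg'
    have hderiv : ∀ t : ℝ, 0 < t → HasDerivAt g (g' t) t := by
      intro t ht
      exact HasDerivAt.fun_sum fun j _ =>
        (Real.hasDerivAt_rpow_const (Or.inl ht.ne')).const_mul (c j)
    -- Rolle on each interval
    have hroll : ∀ i : Fin m, ∃ w ∈ Set.Ioo (z i.castSucc) (z i.succ), g' w = 0 := by
      intro i
      have hab : z i.castSucc < z i.succ := hz Fin.castSucc_lt_succ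
      have hpos : ∀ t ∈ Set.Icc (z i.castSucc) (z i.succ), 0 < t :=
        fun t ht => lt_of_lt_of_le (hz0 i.castSucc) ht.1
      have hcont : ContinuousOn g (Set.Icc (z i.castSucc) (z i.succ)) := by
        refine continuousOn_finset_sum _ fun j _ => ContinuousOn.mul continuousOn_const ?_
        exact continuousOn_id.rpow_const (fun t ht => Or.inl (hpos t ht).ne')
      exact exists_hasDerivAt_eq_zero hab hcont (by rw [hgz, hgz])
        (fun t ht => hderiv t (hpos t (Set.Ioo_subset_Icc_self ht)))
    choose w hw hw0 using hroll
    have hwsm : StrictMono w := strictMono_from_ioo hz hw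
    have hwpos : ∀ i, 0 < w i := fun i => lt_trans (hz0 i.castSucc) (hw i).1
    set d : Fin m → ℝ := fun j => c j.succ * (y j.succ - y 0) with hd
    have hdzero : d = 0 := by
      refine ih (fun j => y j.succ - y 0 - 1) ?_ d w hwsm hwpos ?_
      · intro a b hab
        have := hy (Fin.succ_lt_succ_iff.mpr hab)
        simp only [sub_lt_sub_iff_right]
        linarith
      · intro i
        have := hw0 i
        rw [hg'] at this
        simp only [Fin.sum_univ_succ] at this
        simpa [hd, mul_assoc, mul_comm, mul_left_comm] using this
    have hcsucc : ∀ j : Fin m, c j.succ = 0 := by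
      intro j
      have h1 : d j = 0 := by rw [hdzero]; rfl
      have h2 : y 0 < y j.succ := hy (Fin.succ_pos j)
      rw [hd] at h1
      rcases mul_eq_zero.mp h1 with h | h
      · exact h
      · linarith
    have hc0 : c 0 = 0 := by
      have := hzero 0
      simp only [Fin.sum_univ_succ] at this
      simp only [hcsucc, zero_mul, Finset.sum_const_zero, add_zero] at this
      have hp : (0:ℝ) < (z 0) ^ (y 0) := Real.rpow_pos_of_pos (hz0 0) _
      exact (mul_eq_zero.mp this).resolve_right hp.ne'
    funext j
    rcases Fin.eq_zero_or_eq_succ j with h | ⟨k, rfl⟩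
    · rw [h, hc0]; rfl
    · rw [hcsucc k]; rfl
lemma power_det_ne_zero (m : ℕ) (x y : Fin m → ℝ)
    (hx0 : ∀ i, 0 < x i) (hx : StrictMono x) (hy : StrictMono y) :
    Matrix.det (Matrix.of fun i j : Fin m => (x i) ^ (y j)) ≠ 0 := by
  intro hdet
  obtain ⟨v, hv, hmv⟩ := (Matrix.exists_mulVec_eq_zero_iff).mpr hdet
  apply hv
  refine key_zero m y hy v x hx hx0 fun i => ?_
  have := congrFun hmv i
  simpa [Matrix.mulVec, dotProduct, mul_comm] using this
lemma snoc_strictMono {m : ℕ} {u : Fin m → ℝ} (hu : StrictMono u) {t : ℝ}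
    (ht : ∀ i, u i < t) : StrictMono (Fin.snoc u t : Fin (m+1) → ℝ) := by
  intro a b hab
  induction b using Fin.lastCases with
  | last =>
    induction a using Fin.lastCases with
    | last => exact absurd hab (lt_irrefl _)
    | cast a' => simpa using ht a'
  | cast b' =>
    induction a using Fin.lastCases with
    | last => exact absurd hab (not_lt.mpr (Fin.le_last _))
    | cast a' =>
      simpa using hu (Fin.castSucc_lt_castSucc_iff.mp hab)

lemma power_det_pos : ∀ m (x y : Fin m → ℝ), (∀ i, 0 < x i) → StrictMono x → StrictMono y →
    0 < Matrix.det (Matrix.of fun i j : Fin m => (x i) ^ (y j)) := by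
  intro m
  induction m with
  | zero => intro x y _ _ _; simp [Matrix.det_fin_zero]
  | succ m ih =>
    intro x y hx0 hx hy
    set u : Fin m → ℝ := fun i => x i.castSucc with hu
    have husm : StrictMono u := hx.comp Fin.strictMono_castSucc
    have hu0 : ∀ i, 0 < u i := fun i => hx0 _
    set Y : ℝ := y (Fin.last m) with hY
    set A : ℝ → Matrix (Fin (m+1)) (Fin (m+1)) ℝ :=
      fun t => Matrix.of fun i j => ((Fin.snoc u t : Fin (m+1) → ℝ) i) ^ (y j) with hA
    set D : ℝ → ℝ := fun t => (A t).det with hD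
    set B : Fin (m+1) → Matrix (Fin m) (Fin m) ℝ :=
      fun j => Matrix.of fun i k => (u i) ^ (y (j.succAbove k)) with hB
    -- Laplace expansion
    have hlap : ∀ t : ℝ, D t = ∑ j : Fin (m+1), (-1) ^ (m + (j : ℕ)) * t ^ (y j) * (B j).det := by
      intro t
      simp only [hD]
      rw [Matrix.det_succ_row (A t) (Fin.last m)]
      refine Finset.sum_congr rfl fun j _ => ?_
      congr 2
      · simp [hA, Fin.snoc_last]
      · ext i k
        simp [hA, hB, Fin.succAbove_last, Fin.snoc_castSucc]
    -- the value of the last minor, positive by induction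
    have hL : 0 < (B (Fin.last m)).det := by
      have : B (Fin.last m) = Matrix.of fun i k : Fin m => (u i) ^ ((y ∘ Fin.castSucc) k) := by
        ext i k; simp [hB, Fin.succAbove_last]
      rw [this]
      exact ih u (y ∘ Fin.castSucc) hu0 husm (hy.comp Fin.strictMono_castSucc)
    set L : ℝ := (B (Fin.last m)).det with hLd
    set F : ℝ → ℝ := fun t => ∑ j : Fin (m+1), (-1) ^ (m + (j : ℕ)) * t ^ (y j - Y) * (B j).det
      with hF
    have hDF : ∀ t : ℝ, 0 < t → D t = t ^ Y * F t := by
      intro t ht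
      rw [hlap t, hF, Finset.mul_sum]
      refine Finset.sum_congr rfl fun j _ => ?_
      rw [show t ^ (y j) = t ^ Y * t ^ (y j - Y) by
        rw [← Real.rpow_add ht]; ring_nf]
      ring
    -- limit of F at infinity
    have hFlim : Tendsto F atTop (𝓝 L) := by
      have h1 : Tendsto (fun t : ℝ => ∑ j : Fin (m+1),
          (-1 : ℝ) ^ (m + (j : ℕ)) * t ^ (y j - Y) * (B j).det) atTop
          (𝓝 (∑ j : Fin (m+1), if j = Fin.last m then L else 0)) := by
        refine tendsto_finset_sum _ fun j _ => ?_
        by_cases hj : j = Fin.last m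
        · subst hj
          rw [if_pos rfl]
          have heq : (fun t : ℝ => (-1 : ℝ) ^ (m + ((Fin.last m : Fin (m+1)) : ℕ)) *
              t ^ (y (Fin.last m) - Y) * (B (Fin.last m)).det) = fun _ : ℝ => L := by
            funext t
            rw [show y (Fin.last m) - Y = 0 by rw [hY]; ring, Real.rpow_zero]
            have hsgn : (-1 : ℝ) ^ (m + ((Fin.last m : Fin (m+1)) : ℕ)) = 1 :=
              Even.neg_one_pow (by simp only [Fin.val_last]; exact ⟨m, rfl⟩)
            rw [hsgn, hLd]; ring
          rw [heq]
          exact tendsto_const_nhds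
        · simp only [if_neg hj]
          have hylt : y j < Y := hy (Fin.lt_last_iff_ne_last.mpr hj)
          have h0 : Tendsto (fun t : ℝ => t ^ (y j - Y)) atTop (𝓝 0) := by
            have := tendsto_rpow_neg_atTop (show 0 < Y - y j by linarith)
            simpa [neg_sub] using this
          have := (h0.const_mul ((-1 : ℝ) ^ (m + (j : ℕ)))).mul_const ((B j).det)
          simpa using this
      rw [Finset.sum_ite_eq' Finset.univ (Fin.last m) (fun _ => L)] at h1
      simpa using h1
    -- nonvanishing of D for t ≥ x last
    have hDne : ∀ t : ℝ, x (Fin.last m) ≤ t → D t ≠ 0 := by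
      intro t ht
      have htpos : 0 < t := lt_of_lt_of_le (hx0 _) ht
      have hult : ∀ i, u i < t :=
        fun i => lt_of_lt_of_le (hx (Fin.castSucc_lt_last i)) ht
      have hsm : StrictMono (Fin.snoc u t : Fin (m+1) → ℝ) := snoc_strictMono husm hult
      have hpos : ∀ i : Fin (m+1), 0 < (Fin.snoc u t : Fin (m+1) → ℝ) i := by
        intro i
        induction i using Fin.lastCases with
        | last => simpa using htpos
        | cast i' => simpa using hu0 i'
      exact power_det_ne_zero (m+1) _ y hpos hsm hy
    -- find T with D T > 0
    have hev : ∀ᶠ t in (atTop : Filter ℝ), 0 < F t := hFlim (Ioi_mem_nhds hL)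
    obtain ⟨T, hT1, hT2⟩ := (hev.and (eventually_ge_atTop (x (Fin.last m)))).exists
    have hTpos : 0 < T := lt_of_lt_of_le (hx0 _) hT2
    have hDT : 0 < D T := by
      rw [hDF T hTpos]
      exact mul_pos (Real.rpow_pos_of_pos hTpos _) hT1
    -- continuity of D on positive reals
    have hDcont : ContinuousOn D (Set.Ioi (0:ℝ)) := by
      have hAcont : ContinuousOn A (Set.Ioi (0:ℝ)) := by
        refine continuousOn_pi.mpr fun i => continuousOn_pi.mpr fun j => ?_
        induction i using Fin.lastCases with
        | last =>
          have : (fun t : ℝ => A t (Fin.last m) j) = fun t => t ^ (y j) := by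
            funext t; simp [hA]
          rw [this]
          exact continuousOn_id.rpow_const fun t ht => Or.inl (ne_of_gt ht)
        | cast i' =>
          have : (fun t : ℝ => A t i'.castSucc j) = fun _ => (u i') ^ (y j) := by
            funext t; simp [hA]
          rw [this]
          exact continuousOn_const
      exact (Continuous.matrix_det continuous_id).comp_continuousOn hAcont
    -- IVT argument
    have hxl : x (Fin.last m) ≤ T := hT2
    have hkey : 0 < D (x (Fin.last m)) := by
      rcases lt_trichotomy (D (x (Fin.last m))) 0 with hlt | heq | hgt
      · exfalso
        have hsub : Set.Icc (x (Fin.last m)) T ⊆ Set.Ioi (0:ℝ) :=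
          fun t ht => lt_of_lt_of_le (hx0 _) ht.1
        have hc : ContinuousOn D (Set.Icc (x (Fin.last m)) T) := hDcont.mono hsub
        have := intermediate_value_Icc hxl hc
        have h0mem : (0:ℝ) ∈ Set.Icc (D (x (Fin.last m))) (D T) := ⟨hlt.le, hDT.le⟩
        obtain ⟨c, hc1, hc2⟩ := this h0mem
        exact hDne c hc1.1 hc2
      · exact absurd heq (hDne _ le_rfl)
      · exact hgt
    have hxeq : A (x (Fin.last m)) = Matrix.of fun i j => (x i) ^ (y j) := by
      ext i j
      induction i using Fin.lastCases with
      | last => simp [hA]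
      | cast i' => simp [hA, hu]
    simp only [hD] at hkey
    rw [hxeq] at hkey
    exact hkey

theorem power_kernel_STP (m : ℕ) (hm : 1 ≤ m) (x y : Fin m → ℝ)
    (hx0 : ∀ i, 0 < x i) (hx : StrictMono x) (hy : StrictMono y) :
    0 < Matrix.det (Matrix.of fun i j : Fin m => (x i) ^ (y j)) :=
  power_det_pos m x y hx0 hx hy
end

section
/- The kernel K(x,y) = e^{xy} is strictly totally positive of every order on ℝ × ℝ: for any m ≥ 1 and any reals x₁ < ... < xₘ, y₁ < ... < yₘ, det(e^{xᵢyⱼ})_{i,j=1}^m > 0. -/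
open Real Finset

lemma exp_poly_key : ∀ (n : ℕ) (y x : Fin (n+1) → ℝ), StrictMono y → StrictMono x →
    ∀ c : Fin (n+1) → ℝ, (∀ i, ∑ j, c j * Real.exp (y j * x i) = 0) → c = 0 := by
  intro n
  induction n with
  | zero =>
    intro y x hy hx c h
    funext j
    have h0 := h 0
    rw [Fin.sum_univ_one] at h0
    have := Real.exp_ne_zero (y 0 * x 0)
    have hc0 : c 0 = 0 := by
      rcases mul_eq_zero.mp h0 with h' | h'
      · exact h'
      · exact absurd h' this
    have : j = 0 := by fin_cases j; rfl
    simpa [this] using hc0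
  | succ n ih =>
    intro y x hy hx c h
    set g : ℝ → ℝ := fun t => ∑ j, c j * Real.exp ((y j - y 0) * t) with hgdef
    have hg : ∀ t : ℝ, HasDerivAt g (∑ j, c j * ((y j - y 0) * Real.exp ((y j - y 0) * t))) t := by
      intro t
      apply HasDerivAt.fun_sum
      intro j _
      have h1 : HasDerivAt (fun t : ℝ => (y j - y 0) * t) (y j - y 0) t := by
        simpa using (hasDerivAt_id t).const_mul (y j - y 0)
      have h2 := (h1.exp).const_mul (c j)
      simpa [mul_comm, mul_left_comm] using h2
    have hgc : Continuous g := by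
      apply continuous_finset_sum
      intro j _
      exact (continuous_const.mul ((continuous_const.mul continuous_id).rexp))
    have hg0 : ∀ i, g (x i) = 0 := by
      intro i
      have key : g (x i) = Real.exp (-(y 0 * x i)) * ∑ j, c j * Real.exp (y j * x i) := by
        rw [Finset.mul_sum]
        apply Finset.sum_congr rfl
        intro j _
        rw [← mul_assoc, mul_comm (Real.exp (-(y 0 * x i))) (c j), mul_assoc, ← Real.exp_add]
        ring_nf
      rw [key, h i, mul_zero]
    have rolle : ∀ i : Fin (n+1), ∃ z ∈ Set.Ioo (x i.castSucc) (x i.succ), deriv g z = 0 := by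
      intro i
      exact exists_deriv_eq_zero (hx (show i.castSucc < i.succ from Fin.castSucc_lt_succ)) hgc.continuousOn
        (by rw [hg0, hg0])
    choose z hz hdz using rolle
    have hzmono : StrictMono z := by
      intro i j hij
      calc z i < x i.succ := (hz i).2
        _ ≤ x j.castSucc := hx.monotone (Fin.succ_le_castSucc_iff.mpr hij)
        _ < z j := (hz j).1
    have hderiv : ∀ t, deriv g t = ∑ j, c j * ((y j - y 0) * Real.exp ((y j - y 0) * t)) :=
      fun t => (hg t).deriv
    have hc' : (fun j : Fin (n+1) => c j.succ * (y j.succ - y 0)) = 0 := by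
      apply ih (fun j => y j.succ - y 0) z
        (fun i j hij => by simpa using hy (Fin.succ_lt_succ_iff.mpr hij)) hzmono
      intro i
      have h1 := hdz i
      rw [hderiv, Fin.sum_univ_succ] at h1
      simp only [sub_self, zero_mul, mul_zero, zero_add] at h1
      rw [← h1]
      apply Finset.sum_congr rfl
      intro j _
      ring
    have hsucc : ∀ j : Fin (n+1), c j.succ = 0 := by
      intro j
      have h1 := congrFun hc' j
      have h2 : y j.succ - y 0 ≠ 0 := by
        have := hy (Fin.succ_pos j)
        linarith
      simpa [h2] using h1
    have hc0 : c 0 = 0 := by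
      have h0 := h 0
      rw [Fin.sum_univ_succ] at h0
      simp only [hsucc, zero_mul, Finset.sum_const_zero, add_zero] at h0
      rcases mul_eq_zero.mp h0 with h' | h'
      · exact h'
      · exact absurd h' (Real.exp_ne_zero _)
    funext j
    rcases Fin.eq_zero_or_eq_succ j with rfl | ⟨k, rfl⟩
    · simpa using hc0
    · simpa using hsucc k

theorem exp_kernel_STP (m : ℕ) (hm : 1 ≤ m) (x y : Fin m → ℝ)
    (hx : StrictMono x) (hy : StrictMono y) :
    0 < Matrix.det (Matrix.of fun i j : Fin m => Real.exp (x i * y j)) := by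
  obtain ⟨n, rfl⟩ : ∃ n, m = n + 1 := ⟨m - 1, by omega⟩
  set F : (Fin (n+1) → ℝ) → ℝ :=
    fun v => Matrix.det (Matrix.of fun i j : Fin (n+1) => Real.exp (x i * v j)) with hF
  have hFne : ∀ v : Fin (n+1) → ℝ, StrictMono v → F v ≠ 0 := by
    intro v hv hdet
    obtain ⟨w, hw, hmul⟩ := (Matrix.exists_mulVec_eq_zero_iff).mpr hdet
    apply hw
    apply exp_poly_key n v x hv hx
    intro i
    have := congrFun hmul i
    simp only [Matrix.mulVec, dotProduct, Matrix.of_apply, Pi.zero_apply] at this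
    rw [← this]
    apply Finset.sum_congr rfl
    intro j _
    ring
  have hFc : Continuous F := by
    apply Continuous.matrix_det
    apply continuous_matrix
    intro i j
    exact (continuous_const.mul (continuous_apply j)).rexp
  set v₀ : Fin (n+1) → ℝ := fun j => (j : ℝ) with hv₀
  have hv₀mono : StrictMono v₀ := by
    intro i j hij
    show ((i : ℕ) : ℝ) < ((j : ℕ) : ℝ)
    exact_mod_cast hij
  have hFpos : 0 < F v₀ := by
    have heq : F v₀ = Matrix.det (Matrix.vandermonde (fun i => Real.exp (x i))) := by
      apply congrArg Matrix.det
      ext i j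
      simp only [Matrix.of_apply, Matrix.vandermonde_apply, hv₀]
      rw [← Real.exp_nat_mul]
      ring_nf
    rw [heq, Matrix.det_vandermonde]
    apply Finset.prod_pos
    intro i _
    apply Finset.prod_pos
    intro j hj
    have : x i < x j := hx (Finset.mem_Ioi.mp hj)
    have := Real.exp_lt_exp.mpr this
    linarith
  by_contra hle
  push_neg at hle
  have hylt : F y < 0 := lt_of_le_of_ne hle (hFne y hy)
  set p : ℝ → Fin (n+1) → ℝ := fun t j => (1 - t) * y j + t * v₀ j with hp
  have hpmono : ∀ t ∈ Set.Icc (0:ℝ) 1, StrictMono (p t) := by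
    intro t ht i j hij
    have h1 : y i < y j := hy hij
    have h2 : v₀ i < v₀ j := hv₀mono hij
    obtain ⟨ht0, ht1⟩ := ht
    simp only [hp]
    rcases lt_or_eq_of_le ht0 with htpos | hteq
    · nlinarith [mul_pos htpos (sub_pos.mpr h2),
        mul_nonneg (by linarith : (0:ℝ) ≤ 1 - t) (sub_nonneg.mpr h1.le)]
    · rw [← hteq]
      simpa using h1
  have hpc : Continuous fun t => F (p t) := by
    apply hFc.comp
    apply continuous_pi
    intro j
    fun_prop
  have h0 : F (p 0) = F y := by simp [hp]
  have h1 : F (p 1) = F v₀ := by simp [hp]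
  have hsub := intermediate_value_Icc (zero_le_one) hpc.continuousOn
  have hmem : (0:ℝ) ∈ Set.Icc (F (p 0)) (F (p 1)) := by
    rw [h0, h1]
    exact ⟨hylt.le, hFpos.le⟩
  obtain ⟨t, ht, hFt⟩ := hsub hmem
  exact hFne (p t) (hpmono t ht) hFt
end

section
/- For integers 0 ≤ n₁ < n₂ and reals 0 < x₁ < x₂, the determinant det( 1/(x₁)_{n₁}, 1/(x₂)_{n₁} ; 1/(x₁)_{n₂}, 1/(x₂)_{n₂} ) is strictly negative; i.e. the reciprocal Pochhammer kernel 1/(x)ₙ is strictly reverse-rule of order 2 on ℕ₀ × (0,∞). -/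
/-- The Pochhammer symbol `(x)_n = x (x+1) ⋯ (x+n-1)`, with `(x)_0 = 1`. -/
def poch (x : ℝ) (n : ℕ) : ℝ := ∏ k ∈ Finset.range n, (x + k)

lemma poch_pos {x : ℝ} (hx : 0 < x) (n : ℕ) : 0 < poch x n :=
  Finset.prod_pos fun k _ => by positivity

theorem inv_pochhammer_kernel_RR2 (n₁ n₂ : ℕ) (hn : n₁ < n₂) (x₁ x₂ : ℝ)
    (hx0 : 0 < x₁) (hx : x₁ < x₂) :
    (poch x₁ n₁)⁻¹ * (poch x₂ n₂)⁻¹ - (poch x₂ n₁)⁻¹ * (poch x₁ n₂)⁻¹ < 0 := by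
  have hx20 : 0 < x₂ := hx0.trans hx
  have p11 := poch_pos hx0 n₁
  have p12 := poch_pos hx0 n₂
  have p21 := poch_pos hx20 n₁
  have p22 := poch_pos hx20 n₂
  have hsplit : ∀ x : ℝ, poch x n₂ = poch x n₁ * ∏ k ∈ Finset.Ico n₁ n₂, (x + k) := by
    intro x
    rw [poch, poch, Finset.range_eq_Ico, ← Finset.prod_Ico_consecutive _ (Nat.zero_le n₁) hn.le, Finset.range_eq_Ico]
  have htail : (∏ k ∈ Finset.Ico n₁ n₂, (x₁ + k)) < ∏ k ∈ Finset.Ico n₁ n₂, (x₂ + k) := by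
    apply Finset.prod_lt_prod_of_nonempty
    · intro k _; positivity
    · intro k _; linarith
    · exact Finset.nonempty_Ico.mpr hn
  have key : poch x₂ n₁ * poch x₁ n₂ < poch x₁ n₁ * poch x₂ n₂ := by
    rw [hsplit x₁, hsplit x₂]
    have hT1 : 0 < ∏ k ∈ Finset.Ico n₁ n₂, (x₁ + k) :=
      Finset.prod_pos fun k _ => by positivity
    calc poch x₂ n₁ * (poch x₁ n₁ * ∏ k ∈ Finset.Ico n₁ n₂, (x₁ + k))
        < poch x₂ n₁ * (poch x₁ n₁ * ∏ k ∈ Finset.Ico n₁ n₂, (x₂ + k)) := by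
          apply mul_lt_mul_of_pos_left _ p21
          exact mul_lt_mul_of_pos_left htail p11
      _ = poch x₁ n₁ * (poch x₂ n₁ * ∏ k ∈ Finset.Ico n₁ n₂, (x₂ + k)) := by ring
  have h1 : (poch x₁ n₁)⁻¹ * (poch x₂ n₂)⁻¹ = (poch x₁ n₁ * poch x₂ n₂)⁻¹ := by
    rw [mul_inv]
  have h2 : (poch x₂ n₁)⁻¹ * (poch x₁ n₂)⁻¹ = (poch x₂ n₁ * poch x₁ n₂)⁻¹ := by
    rw [mul_inv]
  rw [h1, h2, sub_neg]
  exact inv_strictAnti₀ (by positivity) key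
end

section
/- Suppose bₖ > 0 for all k ≥ 0, and there is m ≥ 1 such that a₀/b₀ ≤ a₁/b₁ ≤ ... ≤ aₘ/bₘ and aₘ/bₘ ≥ a_{m+1}/b_{m+1} ≥ ..., with at least one strict inequality in each chain. Define F(x) = (∑_{k≥0} aₖ(x)ₖ)/(∑_{k≥0} bₖ(x)ₖ), assuming both series converge uniformly on compact subsets of ℝ (in particular converge absolutely for all x > 0). Then F(x+1) − F(x) < 0 for all sufficiently large x > 0. -/
set_option maxHeartbeats 1000000

lemma pow_le_poch {x : ℝ} (hx : 0 ≤ x) (n : ℕ) : x ^ n ≤ poch x n := by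
  have h : (∏ _k ∈ Finset.range n, x) = x ^ n := by
    rw [Finset.prod_const, Finset.card_range]
  rw [poch, ← h]
  apply Finset.prod_le_prod
  · intro i _; exact hx
  · intro i _; linarith [Nat.cast_nonneg (α := ℝ) i]

lemma poch_le_pow {x : ℝ} (hx : 0 ≤ x) {n K : ℕ} (h : n ≤ K) :
    poch x n ≤ (x + K) ^ n := by
  have h' : (∏ _k ∈ Finset.range n, (x + (K:ℝ))) = (x + K) ^ n := by
    rw [Finset.prod_const, Finset.card_range]
  rw [poch, ← h']
  apply Finset.prod_le_prod
  · intro i _; positivity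
  · intro i hi
    simp only [Finset.mem_range] at hi
    have : (i : ℝ) ≤ K := by exact_mod_cast le_of_lt (lt_of_lt_of_le hi h)
    linarith

lemma poch_shift (x : ℝ) (n : ℕ) : x * poch (x + 1) n = (x + n) * poch x n := by
  have h1 : x * poch (x+1) n = ∏ k ∈ Finset.range (n+1), (x + k) := by
    rw [Finset.prod_range_succ' (fun k => (x + (k:ℝ)))]
    have : (∏ k ∈ Finset.range n, (x + ((k:ℝ) + 1))) = poch (x+1) n := by
      apply Finset.prod_congr rfl
      intro i _; ring
    push_cast
    rw [this]; ring
  have h2 : (x + n) * poch x n = ∏ k ∈ Finset.range (n+1), (x + k) := by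
    rw [Finset.prod_range_succ, poch, mul_comm]
  rw [h1, h2]

/-- The symmetrized summand. -/
def usum (b r : ℕ → ℝ) (x : ℝ) (k n : ℕ) : ℝ :=
  ((n:ℝ) - k) * (r n - r k) * ((b k * b n) * (poch x k * poch x n))

lemma main_est (b r : ℕ → ℝ) (hb : ∀ k, 0 < b k) (m k₀ : ℕ) (hm : 1 ≤ m) (hmk : m ≤ k₀)
    (mono_up : ∀ j k, j ≤ k → k ≤ m → r j ≤ r k)
    (mono_down : ∀ j k, m ≤ j → j ≤ k → r k ≤ r j)
    (hδ : r (k₀+1) < r k₀)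
    (x : ℝ) (hx0 : 0 < x) (hx1 : 1 ≤ x)
    (hbound1 : (r m - r 0) * ((k₀:ℝ)+1) * (∑ k ∈ Finset.range m, b k * poch x k)
        ≤ (r k₀ - r (k₀+1)) * b k₀ * poch x k₀)
    (hbound2 : (∑ q ∈ (Finset.range (k₀+2)) ×ˢ (Finset.range (k₀+2)),
          |((q.2:ℝ) - q.1) * (r q.2 - r q.1) * (b q.1 * b q.2)|) * (x + ((k₀:ℝ)+2))^(2*k₀)
        ≤ (r k₀ - r (k₀+1)) * (b k₀ * b (k₀+1)) * x^(2*k₀+1))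
    (N : ℕ) (hN : k₀ + 2 ≤ N) :
    ∑ k ∈ Finset.range N, ∑ n ∈ Finset.range N, usum b r x k n
      ≤ -((r k₀ - r (k₀+1)) * (b k₀ * b (k₀+1))) := by
  have hppos : ∀ k, 0 < poch x k := fun k => poch_pos hx0 k
  have hδpos : (0:ℝ) < r k₀ - r (k₀+1) := by linarith
  have hC0 : (0:ℝ) ≤ r m - r 0 := by
    have := mono_up 0 m (Nat.zero_le m) le_rfl
    linarith
  have r_le_m : ∀ n, r n ≤ r m := by
    intro n
    rcases le_total n m with h | h
    · exact mono_up n m h le_rfl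
    · exact mono_down m n le_rfl h
  have key_nonpos : ∀ k n, m ≤ k → m ≤ n → usum b r x k n ≤ 0 := by
    intro k n hk hn
    have h3 : 0 < (b k * b n) * (poch x k * poch x n) :=
      mul_pos (mul_pos (hb k) (hb n)) (mul_pos (hppos k) (hppos n))
    rcases le_total k n with h | h
    · have h1 : (0:ℝ) ≤ (n:ℝ) - k := by
        have : (k:ℝ) ≤ n := by exact_mod_cast h
        linarith
      have h2 : r n - r k ≤ 0 := by have := mono_down k n hk h; linarith
      unfold usum
      nlinarith [mul_nonneg h1 h3.le]
    · have h1 : ((n:ℝ) - k) ≤ 0 := by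
        have : (n:ℝ) ≤ k := by exact_mod_cast h
        linarith
      have h2 : 0 ≤ r n - r k := by have := mono_down n k hn h; linarith
      unfold usum
      nlinarith [mul_nonneg h2 h3.le]
  -- Σ₃ : both indices ≥ K
  have hS3 : ∑ k ∈ Finset.Ico (k₀+2) N, ∑ n ∈ Finset.Ico (k₀+2) N, usum b r x k n ≤ 0 := by
    apply Finset.sum_nonpos; intro k hk
    apply Finset.sum_nonpos; intro n hn
    rw [Finset.mem_Ico] at hk hn
    exact key_nonpos k n (by omega) (by omega)
  -- Σ₂ : k < K ≤ n
  have hS2 : ∑ k ∈ Finset.range (k₀+2), ∑ n ∈ Finset.Ico (k₀+2) N, usum b r x k n ≤ 0 := by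
    rw [Finset.sum_comm]
    apply Finset.sum_nonpos
    intro n hn
    rw [Finset.mem_Ico] at hn
    have hnk₀ : (0:ℝ) ≤ (n:ℝ) - k₀ := by
      have : ((k₀:ℝ)) ≤ n := by exact_mod_cast (by omega : k₀ ≤ n)
      linarith
    have hsplit : ∑ k ∈ Finset.range (k₀+2), usum b r x k n
        = ∑ k ∈ Finset.range m, usum b r x k n + ∑ k ∈ Finset.Ico m (k₀+2), usum b r x k n := by
      rw [Finset.range_eq_Ico, Finset.range_eq_Ico]
      exact (Finset.sum_Ico_consecutive _ (Nat.zero_le m) (by omega : m ≤ k₀+2)).symm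
    rw [hsplit]
    -- part 2 : the k₀ term dominates
    have hpart2 : ∑ k ∈ Finset.Ico m (k₀+2), usum b r x k n
        ≤ -((r k₀ - r (k₀+1)) * ((n:ℝ) - k₀) * ((b k₀ * b n) * (poch x k₀ * poch x n))) := by
      have step : ∑ k ∈ Finset.Ico m (k₀+2), usum b r x k n
          ≤ ∑ k ∈ Finset.Ico m (k₀+2),
              (if k = k₀ then
                -((r k₀ - r (k₀+1)) * ((n:ℝ) - k₀) * ((b k₀ * b n) * (poch x k₀ * poch x n)))
              else 0) := by
        apply Finset.sum_le_sum
        intro k hk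
        rw [Finset.mem_Ico] at hk
        by_cases hkk : k = k₀
        · rw [if_pos hkk, hkk]
          have hr : r n - r k₀ ≤ -(r k₀ - r (k₀+1)) := by
            have h1 : r n ≤ r (k₀+1) := mono_down (k₀+1) n (by omega) (by omega)
            linarith
          have h3 : 0 < (b k₀ * b n) * (poch x k₀ * poch x n) :=
            mul_pos (mul_pos (hb k₀) (hb n)) (mul_pos (hppos k₀) (hppos n))
          unfold usum
          nlinarith [mul_nonneg hnk₀ h3.le]
        · rw [if_neg hkk]
          exact key_nonpos k n hk.1 (by omega)
      rw [Finset.sum_ite_eq' (Finset.Ico m (k₀+2)) k₀] at step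
      rw [if_pos (by rw [Finset.mem_Ico]; omega)] at step
      exact step
    -- part 1 : positive terms bounded
    have hpart1 : ∑ k ∈ Finset.range m, usum b r x k n
        ≤ (r m - r 0) * ((k₀:ℝ)+1) * (((n:ℝ) - k₀) * (b n * poch x n))
            * ∑ k ∈ Finset.range m, b k * poch x k := by
      rw [Finset.mul_sum]
      apply Finset.sum_le_sum
      intro k hk
      rw [Finset.mem_range] at hk
      have h3 : 0 < (b k * b n) * (poch x k * poch x n) :=
        mul_pos (mul_pos (hb k) (hb n)) (mul_pos (hppos k) (hppos n))
      have hbnpn : (0:ℝ) < b n * poch x n := mul_pos (hb n) (hppos n)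
      have hbkpk : (0:ℝ) < b k * poch x k := mul_pos (hb k) (hppos k)
      rcases le_or_gt (r n - r k) 0 with hr | hr
      · have hle0 : usum b r x k n ≤ 0 := by
          have h1 : (0:ℝ) ≤ (n:ℝ) - k := by
            have : (k:ℝ) ≤ n := by exact_mod_cast (by omega : k ≤ n)
            linarith
          unfold usum
          nlinarith [mul_nonneg h1 h3.le]
        have hge0 : 0 ≤ (r m - r 0) * ((k₀:ℝ)+1) * (((n:ℝ) - k₀) * (b n * poch x n))
            * (b k * poch x k) :=
          mul_nonneg (mul_nonneg (mul_nonneg hC0 (by positivity))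
            (mul_nonneg hnk₀ hbnpn.le)) hbkpk.le
        linarith
      · have hrC : r n - r k ≤ r m - r 0 := by
          have h1 : r n ≤ r m := r_le_m n
          have h2 : r 0 ≤ r k := mono_up 0 k (Nat.zero_le k) (by omega)
          linarith
        have hnk : (0:ℝ) ≤ (n:ℝ) - k := by
          have : (k:ℝ) ≤ n := by exact_mod_cast (by omega : k ≤ n)
          linarith
        have hlin : ((n:ℝ) - k) ≤ ((k₀:ℝ)+1) * ((n:ℝ) - k₀) := by
          have hcn : ((k₀:ℝ)) + 2 ≤ n := by exact_mod_cast (by omega : k₀ + 2 ≤ n)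
          have hck : (0:ℝ) ≤ (k:ℝ) := Nat.cast_nonneg k
          have hck₀ : (0:ℝ) ≤ (k₀:ℝ) := Nat.cast_nonneg k₀
          nlinarith [mul_nonneg hck₀ (by linarith : (0:ℝ) ≤ (n:ℝ) - (k₀:ℝ) - 1)]
        have key : ((n:ℝ) - k) * (r n - r k) ≤ (((k₀:ℝ)+1) * ((n:ℝ) - k₀)) * (r m - r 0) :=
          mul_le_mul hlin hrC hr.le (mul_nonneg (by positivity) hnk₀)
        calc usum b r x k n
            = (((n:ℝ) - k) * (r n - r k)) * ((b k * b n) * (poch x k * poch x n)) := by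
              unfold usum; ring
          _ ≤ ((((k₀:ℝ)+1) * ((n:ℝ) - k₀)) * (r m - r 0)) * ((b k * b n) * (poch x k * poch x n)) :=
              mul_le_mul_of_nonneg_right key h3.le
          _ = (r m - r 0) * ((k₀:ℝ)+1) * (((n:ℝ) - k₀) * (b n * poch x n)) * (b k * poch x k) := by
              ring
    -- combine using hbound1
    have hfac : 0 ≤ ((n:ℝ) - k₀) * (b n * poch x n) :=
      mul_nonneg hnk₀ (mul_pos (hb n) (hppos n)).le
    have hcomb := mul_le_mul_of_nonneg_right hbound1 hfac
    nlinarith [hpart1, hpart2, hcomb]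
  -- Σ₁ : the finite block
  have usymm : ∀ k n, usum b r x n k = usum b r x k n := by
    intro k n; unfold usum; ring
  have hxK1 : (1:ℝ) ≤ x + ((k₀:ℝ)+2) := by
    have : (0:ℝ) ≤ (k₀:ℝ) := Nat.cast_nonneg k₀
    linarith
  have hS1 : ∑ k ∈ Finset.range (k₀+2), ∑ n ∈ Finset.range (k₀+2), usum b r x k n
      ≤ -((r k₀ - r (k₀+1)) * (b k₀ * b (k₀+1)) * x^(2*k₀+1)) := by
    have hsq : ∑ k ∈ Finset.range (k₀+2), ∑ n ∈ Finset.range (k₀+2), usum b r x k n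
        = ∑ q ∈ (Finset.range (k₀+2)) ×ˢ (Finset.range (k₀+2)), usum b r x q.1 q.2 := by
      rw [Finset.sum_product]
    have he1 : ((k₀, k₀+1) : ℕ × ℕ) ∈ (Finset.range (k₀+2)) ×ˢ (Finset.range (k₀+2)) := by
      rw [Finset.mem_product]; constructor <;> (rw [Finset.mem_range]; omega)
    have hne : ((k₀+1, k₀) : ℕ × ℕ) ≠ (k₀, k₀+1) := by
      intro h; rw [Prod.mk.injEq] at h; omega
    have he2 : ((k₀+1, k₀) : ℕ × ℕ) ∈
        ((Finset.range (k₀+2)) ×ˢ (Finset.range (k₀+2))).erase (k₀, k₀+1) := by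
      rw [Finset.mem_erase]
      refine ⟨hne, ?_⟩
      rw [Finset.mem_product]; constructor <;> (rw [Finset.mem_range]; omega)
    rw [hsq, ← Finset.add_sum_erase _ _ he1, ← Finset.add_sum_erase _ _ he2]
    -- the two key terms
    have hppkey : x^(2*k₀+1) ≤ poch x k₀ * poch x (k₀+1) := by
      rw [show 2*k₀+1 = k₀ + (k₀+1) by omega, pow_add]
      exact mul_le_mul (pow_le_poch hx0.le k₀) (pow_le_poch hx0.le (k₀+1))
        (by positivity) (hppos k₀).le
    have hkeyval : usum b r x k₀ (k₀+1)
        = -((r k₀ - r (k₀+1)) * ((b k₀ * b (k₀+1)) * (poch x k₀ * poch x (k₀+1)))) := by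
      unfold usum; push_cast; ring
    have hkeyval2 : usum b r x (k₀+1) k₀
        = -((r k₀ - r (k₀+1)) * ((b k₀ * b (k₀+1)) * (poch x k₀ * poch x (k₀+1)))) := by
      unfold usum; push_cast; ring
    have hbbpos : (0:ℝ) < b k₀ * b (k₀+1) := mul_pos (hb k₀) (hb (k₀+1))
    have hkey_le : usum b r x k₀ (k₀+1)
        ≤ -((r k₀ - r (k₀+1)) * (b k₀ * b (k₀+1)) * x^(2*k₀+1)) := by
      rw [hkeyval]
      nlinarith [mul_pos hδpos hbbpos]
    have hkey_le2 : usum b r x (k₀+1) k₀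
        ≤ -((r k₀ - r (k₀+1)) * (b k₀ * b (k₀+1)) * x^(2*k₀+1)) := by
      rw [hkeyval2]
      nlinarith [mul_pos hδpos hbbpos]
    -- remainder bound
    have hrem : ∑ q ∈ (((Finset.range (k₀+2)) ×ˢ (Finset.range (k₀+2))).erase
          (k₀, k₀+1)).erase (k₀+1, k₀), usum b r x q.1 q.2
        ≤ (∑ q ∈ (Finset.range (k₀+2)) ×ˢ (Finset.range (k₀+2)),
            |((q.2:ℝ) - q.1) * (r q.2 - r q.1) * (b q.1 * b q.2)|) * (x + ((k₀:ℝ)+2))^(2*k₀) := by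
      rw [Finset.sum_mul]
      calc ∑ q ∈ (((Finset.range (k₀+2)) ×ˢ (Finset.range (k₀+2))).erase
              (k₀, k₀+1)).erase (k₀+1, k₀), usum b r x q.1 q.2
          ≤ ∑ q ∈ (((Finset.range (k₀+2)) ×ˢ (Finset.range (k₀+2))).erase
              (k₀, k₀+1)).erase (k₀+1, k₀),
              |((q.2:ℝ) - q.1) * (r q.2 - r q.1) * (b q.1 * b q.2)| * (x + ((k₀:ℝ)+2))^(2*k₀) := by
            apply Finset.sum_le_sum
            intro q hq
            obtain ⟨k, n⟩ := q
            rw [Finset.mem_erase, Finset.mem_erase, Finset.mem_product,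
              Finset.mem_range, Finset.mem_range] at hq
            obtain ⟨hq2, hq1, hk, hn⟩ := hq
            by_cases hkn : k = n
            · subst hkn
              have : usum b r x k k = 0 := by unfold usum; ring
              rw [this]
              positivity
            · have hkn2 : k + n ≤ 2*k₀ := by
                by_contra hcon
                have hcase : k = k₀ ∧ n = k₀+1 ∨ k = k₀+1 ∧ n = k₀ := by omega
                rcases hcase with ⟨h1, h2⟩ | ⟨h1, h2⟩
                · exact absurd (by rw [h1, h2]) hq1
                · exact absurd (by rw [h1, h2]) hq2
              have hpp : poch x k * poch x n ≤ (x + ((k₀:ℝ)+2))^(2*k₀) := by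
                have hck : poch x k ≤ (x + ((k₀+2:ℕ):ℝ))^k := poch_le_pow hx0.le (by omega)
                have hcn : poch x n ≤ (x + ((k₀+2:ℕ):ℝ))^n := poch_le_pow hx0.le (by omega)
                have hcast : ((k₀+2:ℕ):ℝ) = (k₀:ℝ)+2 := by push_cast; ring
                rw [hcast] at hck hcn
                calc poch x k * poch x n ≤ (x + ((k₀:ℝ)+2))^k * (x + ((k₀:ℝ)+2))^n :=
                      mul_le_mul hck hcn (hppos n).le (by positivity)
                  _ = (x + ((k₀:ℝ)+2))^(k+n) := (pow_add _ k n).symm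
                  _ ≤ (x + ((k₀:ℝ)+2))^(2*k₀) := pow_le_pow_right₀ hxK1 hkn2
              calc usum b r x k n
                  = (((n:ℝ) - k) * (r n - r k) * (b k * b n)) * (poch x k * poch x n) := by
                    unfold usum; ring
                _ ≤ |((n:ℝ) - k) * (r n - r k) * (b k * b n)| * (poch x k * poch x n) :=
                    mul_le_mul_of_nonneg_right (le_abs_self _)
                      (mul_pos (hppos k) (hppos n)).le
                _ ≤ |((n:ℝ) - k) * (r n - r k) * (b k * b n)| * (x + ((k₀:ℝ)+2))^(2*k₀) :=
                    mul_le_mul_of_nonneg_left hpp (abs_nonneg _)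
        _ ≤ ∑ q ∈ (Finset.range (k₀+2)) ×ˢ (Finset.range (k₀+2)),
              |((q.2:ℝ) - q.1) * (r q.2 - r q.1) * (b q.1 * b q.2)| * (x + ((k₀:ℝ)+2))^(2*k₀) := by
            apply Finset.sum_le_sum_of_subset_of_nonneg
            · exact (Finset.erase_subset _ _).trans (Finset.erase_subset _ _)
            · intro q _ _
              positivity
    have hxpow1 : (1:ℝ) ≤ x^(2*k₀+1) := one_le_pow₀ hx1
    linarith [hbound2]
  -- assembly
  have hsplitN : ∀ f : ℕ → ℝ, ∑ i ∈ Finset.range N, f i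
      = ∑ i ∈ Finset.range (k₀+2), f i + ∑ i ∈ Finset.Ico (k₀+2) N, f i := by
    intro f
    rw [Finset.range_eq_Ico, Finset.range_eq_Ico]
    exact (Finset.sum_Ico_consecutive _ (Nat.zero_le _) hN).symm
  have hS2b : ∑ k ∈ Finset.Ico (k₀+2) N, ∑ n ∈ Finset.range (k₀+2), usum b r x k n ≤ 0 := by
    have : ∑ k ∈ Finset.Ico (k₀+2) N, ∑ n ∈ Finset.range (k₀+2), usum b r x k n
        = ∑ k ∈ Finset.range (k₀+2), ∑ n ∈ Finset.Ico (k₀+2) N, usum b r x k n := by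
      rw [Finset.sum_comm]
      exact Finset.sum_congr rfl fun k _ => Finset.sum_congr rfl fun n _ => usymm k n
    rw [this]
    exact hS2
  have expand : ∑ k ∈ Finset.range N, ∑ n ∈ Finset.range N, usum b r x k n
      = (∑ k ∈ Finset.range (k₀+2), ∑ n ∈ Finset.range (k₀+2), usum b r x k n
        + ∑ k ∈ Finset.range (k₀+2), ∑ n ∈ Finset.Ico (k₀+2) N, usum b r x k n)
        + (∑ k ∈ Finset.Ico (k₀+2) N, ∑ n ∈ Finset.range (k₀+2), usum b r x k n
        + ∑ k ∈ Finset.Ico (k₀+2) N, ∑ n ∈ Finset.Ico (k₀+2) N, usum b r x k n) := by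
    rw [hsplitN (fun k => ∑ n ∈ Finset.range N, usum b r x k n)]
    congr 1
    · rw [← Finset.sum_add_distrib]
      exact Finset.sum_congr rfl fun k _ => hsplitN _
    · rw [← Finset.sum_add_distrib]
      exact Finset.sum_congr rfl fun k _ => hsplitN _
  rw [expand]
  have hxpow1 : (1:ℝ) ≤ x^(2*k₀+1) := one_le_pow₀ hx1
  have hfinal : -((r k₀ - r (k₀+1)) * (b k₀ * b (k₀+1)) * x^(2*k₀+1))
      ≤ -((r k₀ - r (k₀+1)) * (b k₀ * b (k₀+1))) := by
    nlinarith [mul_pos hδpos (mul_pos (hb k₀) (hb (k₀+1)))]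
  linarith [hS1, hS2, hS2b, hS3]



theorem factorial_series_ratio_eventually_decreasing
    (a b : ℕ → ℝ) (hb : ∀ k, 0 < b k) (m : ℕ) (hm : 1 ≤ m)
    (hup : ∀ k, k < m → a k / b k ≤ a (k + 1) / b (k + 1))
    (hdown : ∀ k, m ≤ k → a (k + 1) / b (k + 1) ≤ a k / b k)
    (hup_strict : ∃ k, k < m ∧ a k / b k < a (k + 1) / b (k + 1))
    (hdown_strict : ∃ k, m ≤ k ∧ a (k + 1) / b (k + 1) < a k / b k)
    (A B : ℝ → ℝ)
    (hA : ∀ K : Set ℝ, IsCompact K →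
      TendstoUniformlyOn (fun N x => ∑ k ∈ Finset.range N, a k * poch x k) A
        Filter.atTop K)
    (hB : ∀ K : Set ℝ, IsCompact K →
      TendstoUniformlyOn (fun N x => ∑ k ∈ Finset.range N, b k * poch x k) B
        Filter.atTop K) :
    ∃ X : ℝ, 0 < X ∧ ∀ x : ℝ, X ≤ x → A (x + 1) / B (x + 1) - A x / B x < 0 := by
  classical
  obtain ⟨k₀, hk₀m, hk₀s⟩ := hdown_strict
  -- monotonicity chains
  have mono_up : ∀ j k, j ≤ k → k ≤ m → a j / b j ≤ a k / b k := by
    intro j k hjk hkm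
    induction k with
    | zero => cases Nat.le_zero.mp hjk; exact le_refl _
    | succ n ih =>
      rcases Nat.eq_or_lt_of_le hjk with h | h
      · rw [h]
      · exact le_trans (ih (by omega) (by omega)) (hup n (by omega))
  have mono_down : ∀ j k, m ≤ j → j ≤ k → a k / b k ≤ a j / b j := by
    intro j k hmj hjk
    induction k with
    | zero => omega
    | succ n ih =>
      rcases Nat.eq_or_lt_of_le hjk with h | h
      · rw [h]
      · exact le_trans (hdown n (by omega)) (ih (by omega))
  -- constants
  set r : ℕ → ℝ := fun k => a k / b k with hrdef
  have hδpos : (0:ℝ) < r k₀ - r (k₀+1) := by simp only [hrdef]; linarith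
  have hC0 : (0:ℝ) ≤ r m - r 0 := by
    have := mono_up 0 m (Nat.zero_le m) le_rfl
    simp only [hrdef]; linarith
  have hδ'pos : (0:ℝ) < (r k₀ - r (k₀+1)) * (b k₀ * b (k₀+1)) :=
    mul_pos hδpos (mul_pos (hb k₀) (hb (k₀+1)))
  set Bm : ℝ := ∑ k ∈ Finset.range m, b k with hBmdef
  have hBm0 : 0 ≤ Bm := Finset.sum_nonneg fun k _ => (hb k).le
  set E : ℝ := ∑ q ∈ (Finset.range (k₀+2)) ×ˢ (Finset.range (k₀+2)),
      |((q.2:ℝ) - q.1) * (r q.2 - r q.1) * (b q.1 * b q.2)| with hEdef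
  have hE0 : 0 ≤ E := Finset.sum_nonneg fun q _ => abs_nonneg _
  set Q₁ : ℝ := (r m - r 0) * ((k₀:ℝ)+1) * Bm * 2^k₀ / ((r k₀ - r (k₀+1)) * b k₀) with hQ₁def
  set Q₂ : ℝ := E * 4^k₀ / ((r k₀ - r (k₀+1)) * (b k₀ * b (k₀+1))) with hQ₂def
  have hQ₁0 : 0 ≤ Q₁ :=
    div_nonneg (by positivity) (mul_pos hδpos (hb k₀)).le
  have hQ₂0 : 0 ≤ Q₂ := div_nonneg (by positivity) hδ'pos.le
  refine ⟨1 + m + ((k₀:ℝ)+2) + Q₁ + Q₂, by positivity, ?_⟩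
  intro x hx
  have hcm : (0:ℝ) ≤ (m:ℝ) := Nat.cast_nonneg m
  have hck : (0:ℝ) ≤ (k₀:ℝ) := Nat.cast_nonneg k₀
  have hx1 : 1 ≤ x := by linarith
  have hxm : (m:ℝ) ≤ x := by linarith
  have hxK : (k₀:ℝ)+2 ≤ x := by linarith
  have hxQ₁ : Q₁ ≤ x := by linarith
  have hxQ₂ : Q₂ ≤ x := by linarith
  have hx0 : (0:ℝ) < x := by linarith
  have hppos : ∀ k, 0 < poch x k := fun k => poch_pos hx0 k
  -- bound 1
  have hbound1 : (r m - r 0) * ((k₀:ℝ)+1) * (∑ k ∈ Finset.range m, b k * poch x k)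
      ≤ (r k₀ - r (k₀+1)) * b k₀ * poch x k₀ := by
    have hxm1 : (1:ℝ) ≤ x + m := by linarith
    have hS : ∑ k ∈ Finset.range m, b k * poch x k ≤ Bm * (x + (m:ℝ))^(m-1) := by
      rw [hBmdef, Finset.sum_mul]
      apply Finset.sum_le_sum
      intro k hk
      rw [Finset.mem_range] at hk
      have h1 : poch x k ≤ (x + ((m:ℕ):ℝ))^k := poch_le_pow hx0.le (by omega)
      have h2 : (x + (m:ℝ))^k ≤ (x + (m:ℝ))^(m-1) := pow_le_pow_right₀ hxm1 (by omega)
      calc b k * poch x k ≤ b k * (x + (m:ℝ))^k :=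
            mul_le_mul_of_nonneg_left h1 (hb k).le
        _ ≤ b k * (x + (m:ℝ))^(m-1) := mul_le_mul_of_nonneg_left h2 (hb k).le
    have hpow : (x + (m:ℝ))^(m-1) ≤ 2^k₀ * x^(m-1) := by
      calc (x + (m:ℝ))^(m-1) ≤ (2*x)^(m-1) :=
            pow_le_pow_left₀ (by linarith) (by linarith) _
        _ = 2^(m-1) * x^(m-1) := mul_pow 2 x (m-1)
        _ ≤ 2^k₀ * x^(m-1) := by
            apply mul_le_mul_of_nonneg_right _ (by positivity)
            exact pow_le_pow_right₀ one_le_two (by omega)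
    have hxx : x^(m-1) ≤ x^(k₀-1) := pow_le_pow_right₀ hx1 (by omega)
    have hQ : (r m - r 0) * ((k₀:ℝ)+1) * Bm * 2^k₀ ≤ (r k₀ - r (k₀+1)) * b k₀ * x := by
      have h := mul_le_mul_of_nonneg_left hxQ₁ (mul_pos hδpos (hb k₀)).le
      rw [hQ₁def, mul_div_assoc', mul_div_cancel_left₀] at h
      · linarith [h]
      · exact (mul_pos hδpos (hb k₀)).ne'
    have hxk₀ : x * x^(k₀-1) = x^k₀ := by
      rw [← pow_succ']
      congr 1
      omega
    calc (r m - r 0) * ((k₀:ℝ)+1) * (∑ k ∈ Finset.range m, b k * poch x k)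
        ≤ (r m - r 0) * ((k₀:ℝ)+1) * (Bm * (x + (m:ℝ))^(m-1)) := by
          apply mul_le_mul_of_nonneg_left hS (by positivity)
      _ ≤ (r m - r 0) * ((k₀:ℝ)+1) * (Bm * (2^k₀ * x^(k₀-1))) := by
          apply mul_le_mul_of_nonneg_left _ (by positivity)
          apply mul_le_mul_of_nonneg_left _ hBm0
          calc (x + (m:ℝ))^(m-1) ≤ 2^k₀ * x^(m-1) := hpow
            _ ≤ 2^k₀ * x^(k₀-1) := by
                apply mul_le_mul_of_nonneg_left hxx (by positivity)
      _ = ((r m - r 0) * ((k₀:ℝ)+1) * Bm * 2^k₀) * x^(k₀-1) := by ring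
      _ ≤ ((r k₀ - r (k₀+1)) * b k₀ * x) * x^(k₀-1) := by
          apply mul_le_mul_of_nonneg_right hQ (by positivity)
      _ = (r k₀ - r (k₀+1)) * b k₀ * x^k₀ := by rw [mul_assoc, hxk₀]
      _ ≤ (r k₀ - r (k₀+1)) * b k₀ * poch x k₀ := by
          apply mul_le_mul_of_nonneg_left (pow_le_poch hx0.le k₀)
            (mul_pos hδpos (hb k₀)).le
  -- bound 2
  have hbound2 : E * (x + ((k₀:ℝ)+2))^(2*k₀)
      ≤ (r k₀ - r (k₀+1)) * (b k₀ * b (k₀+1)) * x^(2*k₀+1) := by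
    have h1 : (x + ((k₀:ℝ)+2))^(2*k₀) ≤ 4^k₀ * x^(2*k₀) := by
      calc (x + ((k₀:ℝ)+2))^(2*k₀) ≤ (2*x)^(2*k₀) :=
            pow_le_pow_left₀ (by linarith) (by linarith) _
        _ = (2^2)^k₀ * x^(2*k₀) := by rw [mul_pow, ← pow_mul]
        _ = 4^k₀ * x^(2*k₀) := by norm_num
    have hQ : E * 4^k₀ ≤ (r k₀ - r (k₀+1)) * (b k₀ * b (k₀+1)) * x := by
      have h := mul_le_mul_of_nonneg_left hxQ₂ hδ'pos.le
      rw [hQ₂def, mul_div_assoc', mul_div_cancel_left₀ _ hδ'pos.ne'] at h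
      linarith [h]
    calc E * (x + ((k₀:ℝ)+2))^(2*k₀) ≤ E * (4^k₀ * x^(2*k₀)) :=
          mul_le_mul_of_nonneg_left h1 hE0
      _ = (E * 4^k₀) * x^(2*k₀) := by ring
      _ ≤ ((r k₀ - r (k₀+1)) * (b k₀ * b (k₀+1)) * x) * x^(2*k₀) := by
          apply mul_le_mul_of_nonneg_right hQ (by positivity)
      _ = (r k₀ - r (k₀+1)) * (b k₀ * b (k₀+1)) * x^(2*k₀+1) := by
          rw [mul_assoc, ← pow_succ']
  -- the finite-sum estimate
  have hmain : ∀ N, k₀ + 2 ≤ N →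
      ∑ k ∈ Finset.range N, ∑ n ∈ Finset.range N, usum b r x k n
        ≤ -((r k₀ - r (k₀+1)) * (b k₀ * b (k₀+1))) :=
    main_est b r hb m k₀ hm hk₀m mono_up mono_down (by simp only [hrdef]; exact hk₀s)
      x hx0 hx1 hbound1 hbound2
  -- the algebraic identity
  have ident : ∀ N : ℕ,
      ∑ k ∈ Finset.range N, ∑ n ∈ Finset.range N, usum b r x k n
      = 2 * x * ((∑ k ∈ Finset.range N, a k * poch (x+1) k)
            * (∑ n ∈ Finset.range N, b n * poch x n)
          - (∑ k ∈ Finset.range N, a k * poch x k)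
            * (∑ n ∈ Finset.range N, b n * poch (x+1) n)) := by
    intro N
    have h1 : x * (∑ k ∈ Finset.range N, a k * poch (x+1) k)
        = ∑ k ∈ Finset.range N, a k * ((x+(k:ℝ)) * poch x k) := by
      rw [Finset.mul_sum]
      apply Finset.sum_congr rfl
      intro k _
      rw [show a k * ((x+(k:ℝ)) * poch x k) = a k * ((x+(k:ℝ)) * poch x k) from rfl,
        ← poch_shift]
      ring
    have h2 : x * (∑ k ∈ Finset.range N, b k * poch (x+1) k)
        = ∑ k ∈ Finset.range N, b k * ((x+(k:ℝ)) * poch x k) := by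
      rw [Finset.mul_sum]
      apply Finset.sum_congr rfl
      intro k _
      rw [← poch_shift]
      ring
    have hT : ∀ k n : ℕ, ((a k * ((x+(k:ℝ))*poch x k))*(b n*poch x n)
          - (a k*poch x k)*(b n*((x+(n:ℝ))*poch x n)))
        + ((a n * ((x+(n:ℝ))*poch x n))*(b k*poch x k)
          - (a n*poch x n)*(b k*((x+(k:ℝ))*poch x k)))
        = usum b r x k n := by
      intro k n
      simp only [usum, hrdef]
      have hbk := (hb k).ne'
      have hbn := (hb n).ne'
      field_simp
      ring
    calc ∑ k ∈ Finset.range N, ∑ n ∈ Finset.range N, usum b r x k n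
        = ∑ k ∈ Finset.range N, ∑ n ∈ Finset.range N,
            (((a k * ((x+(k:ℝ))*poch x k))*(b n*poch x n)
              - (a k*poch x k)*(b n*((x+(n:ℝ))*poch x n)))
            + ((a n * ((x+(n:ℝ))*poch x n))*(b k*poch x k)
              - (a n*poch x n)*(b k*((x+(k:ℝ))*poch x k)))) := by
          apply Finset.sum_congr rfl; intro k _
          apply Finset.sum_congr rfl; intro n _
          exact (hT k n).symm
      _ = (∑ k ∈ Finset.range N, ∑ n ∈ Finset.range N,
            ((a k * ((x+(k:ℝ))*poch x k))*(b n*poch x n)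
              - (a k*poch x k)*(b n*((x+(n:ℝ))*poch x n))))
          + ∑ k ∈ Finset.range N, ∑ n ∈ Finset.range N,
            ((a n * ((x+(n:ℝ))*poch x n))*(b k*poch x k)
              - (a n*poch x n)*(b k*((x+(k:ℝ))*poch x k))) := by
          rw [← Finset.sum_add_distrib]
          apply Finset.sum_congr rfl; intro k _
          rw [← Finset.sum_add_distrib]
      _ = 2 * (∑ k ∈ Finset.range N, ∑ n ∈ Finset.range N,
            ((a k * ((x+(k:ℝ))*poch x k))*(b n*poch x n)
              - (a k*poch x k)*(b n*((x+(n:ℝ))*poch x n)))) := by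
          rw [Finset.sum_comm (f := fun k n =>
            ((a n * ((x+(n:ℝ))*poch x n))*(b k*poch x k)
              - (a n*poch x n)*(b k*((x+(k:ℝ))*poch x k))))]
          ring
      _ = 2 * ((∑ k ∈ Finset.range N, a k * ((x+(k:ℝ)) * poch x k))
              * (∑ n ∈ Finset.range N, b n * poch x n)
            - (∑ k ∈ Finset.range N, a k * poch x k)
              * (∑ n ∈ Finset.range N, b n * ((x+(n:ℝ)) * poch x n))) := by
          rw [Finset.sum_mul_sum, Finset.sum_mul_sum, ← Finset.sum_sub_distrib]
          apply congrArg
          apply Finset.sum_congr rfl; intro k _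
          rw [← Finset.sum_sub_distrib]
      _ = 2 * x * ((∑ k ∈ Finset.range N, a k * poch (x+1) k)
              * (∑ n ∈ Finset.range N, b n * poch x n)
            - (∑ k ∈ Finset.range N, a k * poch x k)
              * (∑ n ∈ Finset.range N, b n * poch (x+1) n)) := by
          rw [← h1, ← h2]
          ring
  -- limits
  have limA : ∀ y : ℝ, Filter.Tendsto (fun N => ∑ k ∈ Finset.range N, a k * poch y k)
      Filter.atTop (nhds (A y)) := fun y =>
    (hA {y} isCompact_singleton).tendsto_at rfl
  have limB : ∀ y : ℝ, Filter.Tendsto (fun N => ∑ k ∈ Finset.range N, b k * poch y k)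
      Filter.atTop (nhds (B y)) := fun y =>
    (hB {y} isCompact_singleton).tendsto_at rfl
  have limD : Filter.Tendsto (fun N => 2 * x *
      ((∑ k ∈ Finset.range N, a k * poch (x+1) k)
          * (∑ n ∈ Finset.range N, b n * poch x n)
        - (∑ k ∈ Finset.range N, a k * poch x k)
          * (∑ n ∈ Finset.range N, b n * poch (x+1) n)))
      Filter.atTop (nhds (2 * x * (A (x+1) * B x - A x * B (x+1)))) :=
    (((limA (x+1)).mul (limB x)).sub ((limA x).mul (limB (x+1)))).const_mul _
  have hDle : 2 * x * (A (x+1) * B x - A x * B (x+1))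
      ≤ -((r k₀ - r (k₀+1)) * (b k₀ * b (k₀+1))) := by
    apply le_of_tendsto limD
    rw [Filter.eventually_atTop]
    exact ⟨k₀+2, fun N hN => by rw [← ident N]; exact hmain N hN⟩
  have hD : A (x+1) * B x - A x * B (x+1) < 0 := by nlinarith
  -- positivity of B
  have hBpos : ∀ y : ℝ, 0 < y → 0 < B y := by
    intro y hy
    have hmono : ∀ N, 1 ≤ N → b 0 ≤ ∑ k ∈ Finset.range N, b k * poch y k := by
      intro N hN
      have h0 : b 0 * poch y 0 = b 0 := by simp [poch]
      calc b 0 = b 0 * poch y 0 := h0.symm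
        _ ≤ ∑ k ∈ Finset.range N, b k * poch y k :=
          Finset.single_le_sum (f := fun k => b k * poch y k)
            (fun i _ => (mul_pos (hb i) (poch_pos hy i)).le) (Finset.mem_range.mpr hN)
    have : b 0 ≤ B y := by
      apply ge_of_tendsto (limB y)
      rw [Filter.eventually_atTop]
      exact ⟨1, hmono⟩
    linarith [hb 0]
  have hBx : 0 < B x := hBpos x hx0
  have hBx1 : 0 < B (x+1) := hBpos (x+1) (by linarith)
  rw [div_sub_div _ _ hBx1.ne' hBx.ne']
  apply div_neg_of_neg_of_pos
  · have : A (x+1) * B x - B (x+1) * A x = A (x+1) * B x - A x * B (x+1) := by ring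
    rw [this]
    exact hD
  · exact mul_pos hBx1 hBx
end
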